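/- arXiv:0809.4966 — 3 statements merged into one kernel-verified Lean document; each statement's English description precedes it below -/
import Mathlib

section
/- Fix integers 0 ≤ k ≤ n and set m = n − k. Let P = {p_1 < ⋯ < p_m} and Q = {q_1 < ⋯ < q_m} be index sets with P → Q, and let λ and μ be the corresponding k-strict partitions (so λ → μ). Then N(P,Q) = N(λ,μ). -/
/-! Multiplicities in the Pieri rule for `IG(n-k,2n)`: the multiplicity
`N(P,Q)` defined via cuts of the diagram `D(P,Q)` agrees with the multiplicity
`N(λ,μ)` defined via connected components of the set `𝔸` of boxes. -/

/-- Number of boxes in column `c` (`1`-indexed) of the partition `lam`. -/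
def colCt {m : ℕ} (lam : Fin m → ℕ) (c : ℕ) : ℕ :=
  (Finset.univ.filter fun j : Fin m => c ≤ lam j).card

/-- The box `b = (row, col)` lies in the skew diagram `mu ∖ lam`. -/
def SkewBox {m : ℕ} (lam mu : Fin m → ℕ) (b : Fin m × ℕ) : Prop :=
  lam b.1 < b.2 ∧ b.2 ≤ mu b.1

/-- The boxes `b`, `b'` (rows `0`-indexed, columns `1`-indexed) are `k`-related. -/
def KRel (k : ℕ) {m : ℕ} (b b' : Fin m × ℕ) : Prop :=
  |(b.2 : ℤ) - k - 1| + ((b.1 : ℕ) + 1) = |(b'.2 : ℤ) - k - 1| + ((b'.1 : ℕ) + 1)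

/-- The Pieri relation `P → Q` on index sets for `IG(n-k,2n)`. -/
def IdxArrow (n : ℕ) {m : ℕ} (P Q : Fin m → ℕ) : Prop :=
  (∀ j, Q j ≤ P j) ∧
  (∀ i j : Fin m, (i : ℕ) + 1 = (j : ℕ) → P i ≤ Q j) ∧
  (∀ i j : Fin m, (i : ℕ) + 1 = (j : ℕ) → P i = Q j →
    ∃ l : Fin m, Q l < 2 * n + 1 - P i ∧ 2 * n + 1 - P i < P l)

/-- The sequence `p_0 = 0, p_1, …, p_m` (as a function of `t ∈ ℕ`). -/
def pExt {m : ℕ} (P : Fin m → ℕ) (t : ℕ) : ℕ :=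
  if h : 1 ≤ t ∧ t ≤ m then P ⟨t - 1, by omega⟩ else 0

/-- The sequence `q_1, …, q_m, q_{m+1} = 2n+1` (as a function of `t ∈ ℕ`). -/
def qExt (n : ℕ) {m : ℕ} (Q : Fin m → ℕ) (t : ℕ) : ℕ :=
  if h : 1 ≤ t ∧ t ≤ m then Q ⟨t - 1, by omega⟩ else 2 * n + 1

/-- `c` is a cut through the diagram `D(P,Q)`: `p_t ≤ c < q_{t+1}` for some
`0 ≤ t ≤ m`, with the conventions `p_0 = 0` and `q_{m+1} = 2n+1`. -/
def IsCut (n : ℕ) {m : ℕ} (P Q : Fin m → ℕ) (c : ℕ) : Prop :=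
  ∃ t : ℕ, t ≤ m ∧ pExt P t ≤ c ∧ c < qExt n Q (t + 1)

/-- `I(P,Q) = {c ∈ [0,n] : c or 2n−c is a cut through D(P,Q)}`. -/
def ISet (n : ℕ) {m : ℕ} (P Q : Fin m → ℕ) : Set ℕ :=
  {c : ℕ | c ≤ n ∧ (IsCut n P Q c ∨ IsCut n P Q (2 * n - c))}

/-- `N(P,Q)`: the number of `c ∈ I(P,Q)` with `c ≥ 2` and `c−1 ∉ I(P,Q)`. -/
noncomputable def NIdx (n : ℕ) {m : ℕ} (P Q : Fin m → ℕ) : ℕ :=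
  Nat.card {c : ℕ // c ∈ ISet n P Q ∧ 2 ≤ c ∧ (c - 1) ∉ ISet n P Q}

/-- A box of `μ ∖ λ` is mentioned in condition (1) or (2) of the Pieri relation:
it is `k`-related to the bottom box of a first-`k` column of `μ` of the same
length as in `λ`, or to a removed box or the bottom box of `μ` in a column of
`μ` shorter than in `λ`. -/
def Mentioned (k : ℕ) {m : ℕ} (lam mu : Fin m → ℕ) (b : Fin m × ℕ) : Prop :=
  (∃ c : ℕ, 1 ≤ c ∧ c ≤ k ∧ colCt mu c = colCt lam c ∧
    ∃ j : Fin m, (j : ℕ) + 1 = colCt mu c ∧ KRel k b (j, c)) ∨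
  (∃ c : ℕ, 1 ≤ c ∧ colCt mu c < colCt lam c ∧
    ∃ j : Fin m,
      ((colCt mu c < (j : ℕ) + 1 ∧ (j : ℕ) + 1 ≤ colCt lam c) ∨
        (j : ℕ) + 1 = colCt mu c) ∧
      KRel k b (j, c))

/-- The set `𝔸`: boxes of `μ ∖ λ` in columns `k+1` through `k+n` not mentioned
in condition (1) or (2). -/
def ASet (n k : ℕ) {m : ℕ} (lam mu : Fin m → ℕ) : Set (Fin m × ℕ) :=
  {b | SkewBox lam mu b ∧ k + 1 ≤ b.2 ∧ b.2 ≤ k + n ∧ ¬Mentioned k lam mu b}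

/-- Two boxes are adjacent if they share at least a vertex. -/
def AdjBox {m : ℕ} (b b' : Fin m × ℕ) : Prop :=
  ((b.1 : ℤ) - (b'.1 : ℤ)).natAbs ≤ 1 ∧ ((b.2 : ℤ) - (b'.2 : ℤ)).natAbs ≤ 1

/-- Connectivity within a set `A` of boxes. -/
def ConnIn {m : ℕ} (A : Set (Fin m × ℕ)) (x y : Fin m × ℕ) : Prop :=
  Relation.ReflTransGen (fun a b => a ∈ A ∧ b ∈ A ∧ AdjBox a b) x y

/-- `N(λ,μ)`: the number of connected components of `𝔸` having no box in
column `k+1`. -/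
noncomputable def NPart (n k : ℕ) {m : ℕ} (lam mu : Fin m → ℕ) : ℕ :=
  Nat.card {S : Set (Fin m × ℕ) //
    (∃ b ∈ ASet n k lam mu,
      S = {x | x ∈ ASet n k lam mu ∧ ConnIn (ASet n k lam mu) b x}) ∧
    ∀ x ∈ S, x.2 ≠ k + 1}


section Aux
variable {m : ℕ}

/-- membership in a downward-closed finset of `Fin m` is determined by card. -/
lemma mem_iff_lt_card_of_downclosed (S : Finset (Fin m))
    (h : ∀ i j : Fin m, i ≤ j → j ∈ S → i ∈ S) (i : Fin m) :
    i ∈ S ↔ (i : ℕ) < S.card := by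
  constructor
  · intro hi
    have hsub : Finset.Iic i ⊆ S := fun j hj => h j i (Finset.mem_Iic.mp hj) hi
    have := Finset.card_le_card hsub
    rw [Fin.card_Iic] at this; omega
  · intro hi
    by_contra hns
    have hsub : S ⊆ Finset.Iio i := by
      intro j hj
      rw [Finset.mem_Iio]
      by_contra hji
      exact hns (h i j (le_of_not_gt hji) hj)
    have := Finset.card_le_card hsub
    rw [Fin.card_Iio] at this; omega

lemma card_fin_lt (j : Fin m) :
    (Finset.univ.filter fun i : Fin m => i < j).card = (j : ℕ) := by
  have : (Finset.univ.filter fun i : Fin m => i < j) = Finset.Iio j := by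
    ext i; simp
  rw [this, Fin.card_Iio]

lemma card_fin_le (j : Fin m) :
    (Finset.univ.filter fun i : Fin m => i ≤ j).card = (j : ℕ) + 1 := by
  have : (Finset.univ.filter fun i : Fin m => i ≤ j) = Finset.Iic j := by
    ext i; simp
  rw [this, Fin.card_Iic]

end Aux

/-- Number of entries of `R` which are `≤ x`. -/
def cnt {m : ℕ} (R : Fin m → ℕ) (x : ℕ) : ℕ :=
  (Finset.univ.filter fun i : Fin m => R i ≤ x).card

section CntLemmas
variable {m n : ℕ} {R : Fin m → ℕ}

lemma cnt_le (x : ℕ) : cnt R x ≤ m := by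
  classical
  have := Finset.card_le_card (Finset.filter_subset (fun i : Fin m => R i ≤ x) Finset.univ)
  simpa [cnt] using this

lemma cnt_mono {x y : ℕ} (h : x ≤ y) : cnt R x ≤ cnt R y := by
  classical
  apply Finset.card_le_card
  intro i hi
  simp only [Finset.mem_filter, Finset.mem_univ, true_and] at *
  omega

lemma le_iff_lt_cnt (hmono : StrictMono R) (x : ℕ) (i : Fin m) :
    R i ≤ x ↔ (i : ℕ) < cnt R x := by
  classical
  have := mem_iff_lt_card_of_downclosed (Finset.univ.filter fun i : Fin m => R i ≤ x)
    (fun a b hab hb => by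
      simp only [Finset.mem_filter, Finset.mem_univ, true_and] at *
      exact le_trans (hmono.monotone hab) hb) i
  simpa [cnt] using this

lemma row_le_of_le_cnt (hmono : StrictMono R) {x t : ℕ} (h1 : 1 ≤ t) (h2 : t ≤ cnt R x) :
    R ⟨t - 1, by have := cnt_le (R := R) x; omega⟩ ≤ x := by
  rw [le_iff_lt_cnt hmono]
  simp only []
  omega

/-- Lipschitz property of `cnt`. -/
lemma cnt_lip (hmono : StrictMono R) {x y : ℕ} (h : x ≤ y) :
    cnt R y + x ≤ cnt R x + y := by
  classical
  have hsplit : (Finset.univ.filter fun i : Fin m => R i ≤ y)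
      ⊆ (Finset.univ.filter fun i : Fin m => R i ≤ x) ∪
        (Finset.univ.filter fun i : Fin m => x < R i ∧ R i ≤ y) := by
    intro i hi
    simp only [Finset.mem_filter, Finset.mem_univ, true_and, Finset.mem_union] at *
    omega
  have hcard2 : (Finset.univ.filter fun i : Fin m => x < R i ∧ R i ≤ y).card
      ≤ (Finset.Ioc x y).card := by
    apply Finset.card_le_card_of_injOn R
    · intro i hi
      simp only [Finset.mem_coe, Finset.mem_filter, Finset.mem_univ, true_and] at hi
      simp [Finset.mem_Ioc]; omega
    · exact fun a _ b _ hab => hmono.injective hab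
  rw [Nat.card_Ioc] at hcard2
  have := Finset.card_le_card hsplit
  have := Finset.card_union_le (Finset.univ.filter fun i : Fin m => R i ≤ x)
    (Finset.univ.filter fun i : Fin m => x < R i ∧ R i ≤ y)
  unfold cnt
  omega

/-- Refined Lipschitz property when a value in the interval is omitted. -/
lemma cnt_lip' (hmono : StrictMono R) {x y z : ℕ} (hxz : x < z) (hzy : z ≤ y)
    (hz : ∀ i, R i ≠ z) : cnt R y + x + 1 ≤ cnt R x + y := by
  classical
  have hsplit : (Finset.univ.filter fun i : Fin m => R i ≤ y)
      ⊆ (Finset.univ.filter fun i : Fin m => R i ≤ x) ∪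
        (Finset.univ.filter fun i : Fin m => x < R i ∧ R i ≤ y) := by
    intro i hi
    simp only [Finset.mem_filter, Finset.mem_univ, true_and, Finset.mem_union] at *
    omega
  have hcard2 : (Finset.univ.filter fun i : Fin m => x < R i ∧ R i ≤ y).card
      ≤ ((Finset.Ioc x y).erase z).card := by
    apply Finset.card_le_card_of_injOn R
    · intro i hi
      simp only [Finset.mem_coe, Finset.mem_filter, Finset.mem_univ, true_and] at hi
      simp only [Finset.mem_coe, Finset.mem_erase, Finset.mem_Ioc]
      exact ⟨hz i, hi.1, hi.2⟩
    · exact fun a _ b _ hab => hmono.injective hab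
  rw [Finset.card_erase_of_mem (by simp [Finset.mem_Ioc]; omega), Nat.card_Ioc] at hcard2
  have := Finset.card_le_card hsplit
  have := Finset.card_union_le (Finset.univ.filter fun i : Fin m => R i ≤ x)
    (Finset.univ.filter fun i : Fin m => x < R i ∧ R i ≤ y)
  unfold cnt
  omega

end CntLemmas

/-- The correction term `d_j = #{i < j : R i + R j > 2n+1}`. -/
def dd (n : ℕ) {m : ℕ} (R : Fin m → ℕ) (j : Fin m) : ℕ :=
  (Finset.univ.filter fun i : Fin m => i < j ∧ 2 * n + 1 < R i + R j).card

section DdLemmas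
set_option linter.unusedSectionVars false
variable {m n : ℕ} {R : Fin m → ℕ}
  (hmono : StrictMono R) (hrange : ∀ j, 1 ≤ R j ∧ R j ≤ 2 * n)
  (hidx : ∀ i j, R i + R j ≠ 2 * n + 1)

include hmono hrange hidx

lemma dd_small {j : Fin m} (hj : R j ≤ n) : dd n R j = 0 := by
  classical
  unfold dd
  rw [Finset.card_eq_zero, Finset.filter_eq_empty_iff]
  intro i _
  rintro ⟨hij, hsum⟩
  have := hmono hij
  omega

lemma dd_big {j : Fin m} (hj : n + 1 ≤ R j) :
    cnt R (2 * n - R j) + dd n R j = (j : ℕ) := by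
  classical
  have hRj2n := (hrange j).2
  have hsplit : (Finset.univ.filter fun i : Fin m => i < j)
      = (Finset.univ.filter fun i : Fin m => R i ≤ 2 * n - R j)
        ∪ (Finset.univ.filter fun i : Fin m => i < j ∧ 2 * n + 1 < R i + R j) := by
    ext i
    simp only [Finset.mem_filter, Finset.mem_univ, true_and, Finset.mem_union]
    constructor
    · intro hij
      have hne := hidx i j
      rcases le_or_gt (R i + R j) (2 * n) with h | h
      · left; omega
      · right; exact ⟨hij, by omega⟩
    · rintro (h | h)
      · -- R i ≤ 2n - R j < R j, so i < j
        have : R i < R j := by omega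
        exact hmono.lt_iff_lt.mp this
      · exact h.1
  have hdisj : Disjoint (Finset.univ.filter fun i : Fin m => R i ≤ 2 * n - R j)
      (Finset.univ.filter fun i : Fin m => i < j ∧ 2 * n + 1 < R i + R j) := by
    rw [Finset.disjoint_filter]
    intro i _ h1 h2
    omega
  have := Finset.card_union_of_disjoint hdisj
  rw [← hsplit] at this
  rw [card_fin_lt] at this
  unfold cnt dd
  omega

lemma dd_bound {j : Fin m} (hj : n + 1 ≤ R j) : dd n R j + n + 1 ≤ R j := by
  classical
  have hcard : (Finset.univ.filter fun i : Fin m => i < j ∧ 2 * n + 1 < R i + R j).card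
      ≤ (Finset.Icc (n + 1) (R j - 1)).card := by
    apply Finset.card_le_card_of_injOn (fun i => max (R i) (2 * n + 1 - R i))
    · intro i hi
      simp only [Finset.mem_coe, Finset.mem_filter, Finset.mem_univ, true_and] at hi
      have h1 := hmono hi.1
      have h2 := (hrange i).1
      have h3 := (hrange i).2
      have h4 := (hrange j).2
      simp only [Finset.mem_coe, Finset.mem_Icc]
      constructor
      · omega
      · omega
    · intro a ha b hb hab
      simp only [Finset.mem_coe, Finset.mem_filter, Finset.mem_univ, true_and] at ha hb
      have h2a := (hrange a).2
      have h2b := (hrange b).2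
      have hne := hidx a b
      have hne' := hidx b a
      apply hmono.injective
      simp only [max_def, min_def] at hab
      split_ifs at hab <;> omega
  rw [Nat.card_Icc] at hcard
  have h4 := (hrange j).2
  unfold dd
  omega

/-- Pairing bound: `#{i : R i ≤ v} + #{i : R i > 2n - v} ≤ v` for `v ≤ n`. -/
lemma pair1 {v : ℕ} (hv : v ≤ n) : cnt R v + m ≤ v + cnt R (2 * n - v) := by
  classical
  set A := Finset.univ.filter fun i : Fin m => R i ≤ v with hA
  set B := Finset.univ.filter fun i : Fin m => 2 * n - v < R i with hB
  have hdisj : Disjoint A B := by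
    rw [Finset.disjoint_filter]
    intro i _ h1 h2
    omega
  have hcard : (A ∪ B).card ≤ (Finset.Icc 1 v).card := by
    apply Finset.card_le_card_of_injOn (fun i => min (R i) (2 * n + 1 - R i))
    · intro i hi
      simp only [Finset.mem_coe, hA, hB, Finset.mem_union, Finset.mem_filter, Finset.mem_univ, true_and] at hi
      have h2 := (hrange i).1
      have h3 := (hrange i).2
      simp only [Finset.mem_coe, Finset.mem_Icc]
      rcases hi with h | h
      · omega
      · omega
    · intro a ha b hb hab
      have h2a := (hrange a).2
      have h2b := (hrange b).2
      have h1a := (hrange a).1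
      have h1b := (hrange b).1
      have hne := hidx a b
      have hne' := hidx b a
      apply hmono.injective
      simp only [max_def, min_def] at hab
      split_ifs at hab <;> omega
  rw [Nat.card_Icc, Finset.card_union_of_disjoint hdisj] at hcard
  have hBcard : cnt R (2 * n - v) + B.card = m := by
    have h0 := Finset.card_filter_add_card_filter_not
      (s := (Finset.univ : Finset (Fin m))) (p := fun i : Fin m => R i ≤ 2 * n - v)
    have heq : (Finset.univ.filter fun i : Fin m => ¬(R i ≤ 2 * n - v)) = B := by
      ext i
      simp only [hB, Finset.mem_filter, Finset.mem_univ, true_and]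
      exact Nat.not_le
    rw [heq] at h0
    unfold cnt
    simp only [Finset.card_univ, Fintype.card_fin] at h0
    exact h0
  have hAcnt : A.card = cnt R v := rfl
  omega

/-- `#{i : v < R i ≤ 2n - v} ≤ n - v` for `v ≤ n`. -/
lemma pair2 {v : ℕ} (hv : v ≤ n) : cnt R (2 * n - v) + v ≤ cnt R v + n := by
  classical
  have hsplit : (Finset.univ.filter fun i : Fin m => R i ≤ 2 * n - v)
      ⊆ (Finset.univ.filter fun i : Fin m => R i ≤ v)
        ∪ (Finset.univ.filter fun i : Fin m => v < R i ∧ R i ≤ 2 * n - v) := by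
    intro i hi
    simp only [Finset.mem_filter, Finset.mem_univ, true_and, Finset.mem_union] at *
    omega
  have hcard : (Finset.univ.filter fun i : Fin m => v < R i ∧ R i ≤ 2 * n - v).card
      ≤ (Finset.Ioc v n).card := by
    apply Finset.card_le_card_of_injOn (fun i => min (R i) (2 * n + 1 - R i))
    · intro i hi
      simp only [Finset.mem_coe, Finset.mem_filter, Finset.mem_univ, true_and] at hi
      have h3 := (hrange i).2
      simp only [Finset.mem_coe, Finset.mem_Ioc]
      omega
    · intro a ha b hb hab
      have h2a := (hrange a).2
      have h1a := (hrange a).1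
      have h2b := (hrange b).2
      have h1b := (hrange b).1
      have hne := hidx a b
      have hne' := hidx b a
      apply hmono.injective
      simp only [max_def, min_def] at hab
      split_ifs at hab <;> omega
  rw [Nat.card_Ioc] at hcard
  have := Finset.card_le_card hsplit
  have := Finset.card_union_le (Finset.univ.filter fun i : Fin m => R i ≤ v)
    (Finset.univ.filter fun i : Fin m => v < R i ∧ R i ≤ 2 * n - v)
  unfold cnt
  omega

/-- Key bound: big `R i` below `2n - v` has small "tau". -/
lemma K_le {v : ℕ} {i : Fin m} (hbig : n + 1 ≤ R i) (hle : R i ≤ 2 * n - v) (hv : v ≤ n) :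
    cnt R (2 * n - R i) + R i + v ≤ cnt R v + 2 * n := by
  have h2 := (hrange i).2
  have := cnt_lip (R := R) hmono (x := v) (y := 2 * n - R i) (by omega)
  omega

/-- Key bound: big `R i` above `2n - v` has large "tau". -/
lemma K_gt {v : ℕ} {i : Fin m} (hgt : 2 * n - v < R i) (hv1 : 1 ≤ v) (hv : v ≤ n) :
    cnt R v + 2 * n + 1 ≤ cnt R (2 * n - R i) + R i + v := by
  have h2 := (hrange i).2
  have h1 := (hrange i).1
  have := cnt_lip' (R := R) hmono (x := 2 * n - R i) (y := v) (z := 2 * n + 1 - R i)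
    (by omega) (by omega) (fun i' => by have := hidx i' i; have := (hrange i').2; omega)
  omega

end DdLemmas


section PartLemmas
set_option linter.unusedSectionVars false
variable {m n k : ℕ} {R : Fin m → ℕ} {part : Fin m → ℕ}
  (hmk : m + k = n)
  (hmono : StrictMono R) (hrange : ∀ j, 1 ≤ R j ∧ R j ≤ 2 * n)
  (hidx : ∀ i j, R i + R j ≠ 2 * n + 1)
  (hpart : ∀ j : Fin m, (part j : ℤ) = (n + k + 1 : ℤ) - R j + (dd n R j : ℤ))

include hmk hmono hrange hidx hpart

lemma part_add (j : Fin m) : part j + R j = n + k + 1 + dd n R j := by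
  have h := hpart j
  have h2 := (hrange j).2
  have h1 := (hrange j).1
  -- dd n R j ≤ j < m, and R j ≤ 2n = 2(m+k); so RHS of hpart is determined
  have : ((part j + R j : ℕ) : ℤ) = ((n + k + 1 + dd n R j : ℕ) : ℤ) := by
    push_cast
    omega
  exact_mod_cast this

lemma part_big_le_k {j : Fin m} (hj : n + 1 ≤ R j) : part j ≤ k := by
  have h := part_add hmk hmono hrange hidx hpart j
  have hb := dd_bound hmono hrange hidx hj
  omega

lemma part_small_ge {j : Fin m} (hj : R j ≤ n) : part j + R j = n + k + 1 ∧ k + 1 ≤ part j := by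
  have h := part_add hmk hmono hrange hidx hpart j
  have hs := dd_small hmono hrange hidx hj
  constructor <;> omega

lemma part_anti_adj {a b : Fin m} (hab : (a : ℕ) + 1 = (b : ℕ)) : part b ≤ part a := by
  have hRab : R a < R b := hmono (by omega : a < b)
  have hpa := part_add hmk hmono hrange hidx hpart a
  have hpb := part_add hmk hmono hrange hidx hpart b
  rcases le_or_gt (R b) n with hb | hb
  · -- both small
    have hsa := dd_small hmono hrange hidx (le_trans (le_of_lt hRab) hb)
    have hsb := dd_small hmono hrange hidx hb
    omega
  rcases le_or_gt (R a) n with ha | ha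
  · -- a small, b big
    have h1 := (part_small_ge hmk hmono hrange hidx hpart ha).2
    have h2 := part_big_le_k hmk hmono hrange hidx hpart hb
    omega
  · -- both big
    have hda := dd_big hmono hrange hidx ha
    have hdb := dd_big hmono hrange hidx hb
    have h2a := (hrange a).2
    have h2b := (hrange b).2
    have hlip := cnt_lip' (R := R) hmono (x := 2 * n - R b) (y := 2 * n - R a)
      (z := 2 * n + 1 - R b) (by omega) (by omega)
      (fun i' => by have := hidx i' b; have := (hrange i').2; omega)
    omega

lemma part_anti {a b : Fin m} (hab : a ≤ b) : part b ≤ part a := by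
  obtain ⟨d, hd⟩ : ∃ d, (b : ℕ) = (a : ℕ) + d := ⟨(b : ℕ) - (a : ℕ), by omega⟩
  clear hab
  induction d generalizing b with
  | zero => have : a = b := Fin.ext (by omega); subst this; exact le_refl _
  | succ d ih =>
    rcases Nat.eq_zero_or_pos d with h0 | _
    · subst h0; exact part_anti_adj hmk hmono hrange hidx hpart (by omega)
    · have hcm : (a : ℕ) + d < m := by have := b.isLt; omega
      have h1 := ih (b := ⟨(a : ℕ) + d, hcm⟩) rfl
      have h2 := part_anti_adj hmk hmono hrange hidx hpart
        (a := ⟨(a : ℕ) + d, hcm⟩) (b := b) (by simp; omega)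
      omega

omit hmk hmono hrange hidx hpart in
lemma colCt_le (c : ℕ) : colCt part c ≤ m := by
  classical
  have := Finset.card_le_card (Finset.filter_subset (fun j : Fin m => c ≤ part j) Finset.univ)
  simpa [colCt] using this

lemma lt_colCt_iff (c : ℕ) (j : Fin m) : c ≤ part j ↔ (j : ℕ) < colCt part c := by
  classical
  have := mem_iff_lt_card_of_downclosed (Finset.univ.filter fun i : Fin m => c ≤ part i)
    (fun a b h1 hb => by
      simp only [Finset.mem_filter, Finset.mem_univ, true_and] at *
      exact le_trans hb (part_anti hmk hmono hrange hidx hpart h1)) j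
  simpa [colCt] using this

end PartLemmas

/-- **The Pieri multiplicities agree:** if `P → Q` are index sets for
`IG(n−k,2n)` with associated `k`-strict partitions `λ → μ`, then
`N(P,Q) = N(λ,μ)`. -/
theorem NIdx_eq_NPart (n m k : ℕ) (hmk : m + k = n)
    (P Q : Fin m → ℕ)
    (hPmono : StrictMono P) (hPrange : ∀ j, 1 ≤ P j ∧ P j ≤ 2 * n)
    (hPidx : ∀ i j, P i + P j ≠ 2 * n + 1)
    (hQmono : StrictMono Q) (hQrange : ∀ j, 1 ≤ Q j ∧ Q j ≤ 2 * n)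
    (hQidx : ∀ i j, Q i + Q j ≠ 2 * n + 1)
    (harrow : IdxArrow n P Q)
    (lam mu : Fin m → ℕ)
    (hlam : ∀ j : Fin m, (lam j : ℤ) = (n + k + 1 : ℤ) - P j +
      ((Finset.univ.filter fun i : Fin m => i < j ∧ 2 * n + 1 < P i + P j).card : ℤ))
    (hmu : ∀ j : Fin m, (mu j : ℤ) = (n + k + 1 : ℤ) - Q j +
      ((Finset.univ.filter fun i : Fin m => i < j ∧ 2 * n + 1 < Q i + Q j).card : ℤ)) :
    NIdx n P Q = NPart n k lam mu := by
  classical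
  -- `hlam`/`hmu` in terms of `dd`
  have hlam' : ∀ j : Fin m, (lam j : ℤ) = (n + k + 1 : ℤ) - P j + (dd n P j : ℤ) :=
    fun j => by simpa [dd] using hlam j
  have hmu' : ∀ j : Fin m, (mu j : ℤ) = (n + k + 1 : ℤ) - Q j + (dd n Q j : ℤ) :=
    fun j => by simpa [dd] using hmu j
  have hlamA := part_add hmk hPmono hPrange hPidx hlam'
  have hmuA := part_add hmk hQmono hQrange hQidx hmu'
  -- the chain `p_i ≤ q_{i+1}`
  have chainPQ : ∀ i j : Fin m, i < j → P i ≤ Q j := by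
    intro i j hij
    have hi1 : (i : ℕ) + 1 < m := by have := j.isLt; omega
    have h1 := harrow.2.1 i ⟨(i : ℕ) + 1, hi1⟩ rfl
    have h2 : Q ⟨(i : ℕ) + 1, hi1⟩ ≤ Q j := hQmono.monotone (by simp [Fin.le_def]; omega)
    omega
  have row_unique : ∀ {v : ℕ} {i i' : Fin m}, Q i ≤ v → v < P i → Q i' ≤ v → v < P i' →
      i = i' := by
    intro v i i' h1 h2 h3 h4
    rcases lt_trichotomy i i' with h | h | h
    · have := chainPQ i i' h; omega
    · exact h
    · have := chainPQ i' i h; omega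
  have cnt_eq_row : ∀ {v : ℕ} {j : Fin m}, Q j ≤ v → v < P j →
      cnt P v = (j : ℕ) ∧ cnt Q v = (j : ℕ) + 1 := by
    intro v j h1 h2
    constructor
    · have he : (Finset.univ.filter fun i : Fin m => P i ≤ v)
          = Finset.univ.filter fun i : Fin m => i < j := by
        ext i
        simp only [Finset.mem_filter, Finset.mem_univ, true_and]
        constructor
        · intro h; exact hPmono.lt_iff_lt.mp (by omega)
        · intro h; have := chainPQ i j h; omega
      unfold cnt
      rw [he, card_fin_lt]
    · have he : (Finset.univ.filter fun i : Fin m => Q i ≤ v)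
          = Finset.univ.filter fun i : Fin m => i ≤ j := by
        ext i
        simp only [Finset.mem_filter, Finset.mem_univ, true_and]
        constructor
        · intro h
          by_contra hij
          have hij' : j < i := lt_of_not_ge hij
          have hj1 : (j : ℕ) + 1 < m := by have := i.isLt; omega
          have ha := harrow.2.1 j ⟨(j : ℕ) + 1, hj1⟩ rfl
          have hb : Q ⟨(j : ℕ) + 1, hj1⟩ ≤ Q i := hQmono.monotone (by simp [Fin.le_def]; omega)
          omega
        · intro h; have := hQmono.monotone h; omega
      unfold cnt
      rw [he, card_fin_le]
  have noncut_iff : ∀ {w : ℕ}, (∃ i, Q i ≤ w ∧ w < P i) ↔ cnt P w < cnt Q w := by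
    intro w
    constructor
    · rintro ⟨i, h1, h2⟩
      have hsub : (Finset.univ.filter fun i : Fin m => P i ≤ w)
          ⊆ (Finset.univ.filter fun i : Fin m => Q i ≤ w).erase i := by
        intro a ha
        simp only [Finset.mem_filter, Finset.mem_univ, true_and, Finset.mem_erase] at *
        have := harrow.1 a
        constructor
        · rintro rfl; omega
        · omega
      have hc1 := Finset.card_le_card hsub
      have hmem : i ∈ (Finset.univ.filter fun i : Fin m => Q i ≤ w) := by
        simp only [Finset.mem_filter, Finset.mem_univ, true_and]; exact h1
      have hc2 := Finset.card_erase_of_mem hmem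
      have hpos : 0 < (Finset.univ.filter fun i : Fin m => Q i ≤ w).card :=
        Finset.card_pos.mpr ⟨i, hmem⟩
      unfold cnt
      omega
    · intro h
      have hsub : (Finset.univ.filter fun i : Fin m => P i ≤ w)
          ⊂ (Finset.univ.filter fun i : Fin m => Q i ≤ w) := by
        constructor
        · intro a ha
          simp only [Finset.mem_filter, Finset.mem_univ, true_and] at *
          have := harrow.1 a
          omega
        · intro hcon
          have := Finset.card_le_card hcon
          unfold cnt at h
          omega
      obtain ⟨i, hi1, hi2⟩ := Finset.exists_of_ssubset hsub
      simp only [Finset.mem_filter, Finset.mem_univ, true_and] at hi1 hi2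
      exact ⟨i, hi1, by omega⟩
  -- `IsCut` in terms of counts
  have cut_iff : ∀ {w : ℕ}, w ≤ 2 * n → (IsCut n P Q w ↔ cnt Q w ≤ cnt P w) := by
    intro w hw
    have hQP : cnt P w ≤ cnt Q w := by
      apply Finset.card_le_card
      intro a ha
      simp only [Finset.mem_filter, Finset.mem_univ, true_and] at *
      have := harrow.1 a
      omega
    constructor
    · rintro ⟨t, htm, h1, h2⟩
      -- no i with Q i ≤ w < P i
      rw [← not_lt, ← noncut_iff]
      rintro ⟨i, hi1, hi2⟩
      rcases lt_or_ge (i : ℕ) t with hit | hit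
      · -- P i ≤ pExt t ≤ w
        have ht1 : 1 ≤ t := by omega
        have htm' : t - 1 < m := by have := i.isLt; omega
        have : P i ≤ P ⟨t - 1, htm'⟩ := hPmono.monotone (by simp [Fin.le_def]; omega)
        unfold pExt at h1
        rw [dif_pos (by omega : 1 ≤ t ∧ t ≤ m)] at h1
        omega
      · -- Q i ≥ qExt (t+1) > w
        have htm' : t < m := by have := i.isLt; omega
        have : Q ⟨t, htm'⟩ ≤ Q i := hQmono.monotone (by simp [Fin.le_def]; omega)
        unfold qExt at h2
        rw [dif_pos (by omega : 1 ≤ t + 1 ∧ t + 1 ≤ m)] at h2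
        simp only [Nat.add_sub_cancel] at h2
        omega
    · intro h
      refine ⟨cnt P w, cnt_le _, ?_, ?_⟩
      · unfold pExt
        split_ifs with hc
        · exact row_le_of_le_cnt hPmono hc.1 le_rfl
        · omega
      · unfold qExt
        split_ifs with hc
        · -- need Q ⟨cnt P w⟩ > w
          by_contra hcon
          have h2 : Q ⟨cnt P w + 1 - 1, by omega⟩ ≤ w := by omega
          rw [le_iff_lt_cnt hQmono] at h2
          simp only [] at h2
          omega
        · omega
  -- columns above `k`: `mu` dominates `lam`
  have high_cols : ∀ c' : ℕ, k + 1 ≤ c' → colCt lam c' ≤ colCt mu c' := by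
    intro c' hc'
    apply Finset.card_le_card
    intro i hi
    simp only [Finset.mem_filter, Finset.mem_univ, true_and] at *
    have hPn : P i ≤ n := by
      by_contra hcon
      have := part_big_le_k hmk hPmono hPrange hPidx hlam' (j := i) (by omega)
      omega
    have hQn : Q i ≤ P i := harrow.1 i
    have h1 := dd_small hPmono hPrange hPidx (j := i) hPn
    have h2 := dd_small hQmono hQrange hQidx (j := i) (by omega)
    have h3 := hlamA i
    have h4 := hmuA i
    omega
  -- the key row equivalences
  have lam_row_iff : ∀ (j : Fin m) (v x c' : ℕ), Q j ≤ v → v < P j → 1 ≤ v → v ≤ n →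
      1 ≤ x → ∀ hxm : x - 1 < m,
      c' + n + 1 + (j : ℕ) = k + 1 + x + v →
      (c' ≤ lam ⟨x - 1, hxm⟩ ↔ P ⟨x - 1, hxm⟩ ≤ 2 * n - v) := by
    intro j v x c' hqv hvp hv1 hvn hx1 hxm hcd
    obtain ⟨hcP, hcQ⟩ := cnt_eq_row hqv hvp
    set i : Fin m := ⟨x - 1, hxm⟩ with hi
    have hadd := hlamA i
    constructor
    · -- `c' ≤ lam i → P i ≤ w`
      intro hl
      by_contra hcon
      have hgt : 2 * n - v < P i := by omega
      have hbig : n + 1 ≤ P i := by omega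
      have hK := K_gt hPmono hPrange hPidx (v := v) (i := i) hgt hv1 hvn
      have hdb := dd_big hPmono hPrange hPidx (j := i) hbig
      have hix : (i : ℕ) = x - 1 := rfl
      omega
    · -- `P i ≤ w → c' ≤ lam i`
      intro hp
      have hxw : x ≤ cnt P (2 * n - v) := by
        have := (le_iff_lt_cnt hPmono (2 * n - v) i).mp hp
        have hix : (i : ℕ) = x - 1 := rfl
        omega
      have hp2 := pair2 hPmono hPrange hPidx (v := v) hvn
      rcases le_or_gt (P i) n with hs | hb
      · have hd0 : 0 ≤ dd n P i := Nat.zero_le _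
        omega
      · have hK := K_le hPmono hPrange hPidx (v := v) (i := i) (by omega) hp hvn
        have hdb := dd_big hPmono hPrange hPidx (j := i) (by omega)
        have hix : (i : ℕ) = x - 1 := rfl
        omega
  have mu_row_iff : ∀ (j : Fin m) (v c' : ℕ) (x : Fin m), Q j ≤ v → v < P j → 1 ≤ v → v ≤ n →
      c' ≤ k →
      c' + n + 1 + (j : ℕ) = k + 1 + (x : ℕ) + v →
      (mu x < c' ↔ 2 * n - v < Q x) := by
    intro j v c' x hqv hvp hv1 hvn hck hcd
    obtain ⟨hcP, hcQ⟩ := cnt_eq_row hqv hvp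
    have hadd := hmuA x
    constructor
    · intro hm
      by_contra hcon
      have hq : Q x ≤ 2 * n - v := by omega
      rcases le_or_gt (Q x) n with hs | hb
      · have h1 := dd_small hQmono hQrange hQidx (j := x) hs
        omega
      · have hK := K_le hQmono hQrange hQidx (v := v) (i := x) (by omega) hq hvn
        have hdb := dd_big hQmono hQrange hQidx (j := x) (by omega)
        omega
    · intro hq
      have hbig : n + 1 ≤ Q x := by omega
      have hK := K_gt hQmono hQrange hQidx (v := v) (i := x) hq hv1 hvn
      have hdb := dd_big hQmono hQrange hQidx (j := x) hbig
      omega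
  -- absolute-value helper for `KRel`
  have absk : ∀ c : ℕ, |(c : ℤ) - k - 1|
      = if k + 1 ≤ c then ((c - (k + 1) : ℕ) : ℤ) else (((k + 1) - c : ℕ) : ℤ) := by
    intro c
    split_ifs with h
    · rw [abs_of_nonneg (by push_cast; omega)]; push_cast; omega
    · rw [abs_of_nonpos (by push_cast; omega)]; push_cast; omega
  -- core of the "mentioned" analysis
  have ment_core : ∀ (j : Fin m) (v c' x : ℕ), Q j ≤ v → v < P j → 1 ≤ v → v ≤ n →
      c' ≤ k → 1 ≤ x → x ≤ colCt lam c' → colCt mu c' ≤ x →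
      c' + n + 1 + (j : ℕ) = k + 1 + x + v →
      cnt Q (2 * n - v) ≤ cnt P (2 * n - v) := by
    intro j v c' x hqv hvp hv1 hvn hck hx1 hxL hMx hcd
    have hxm : x ≤ m := le_trans hxL (colCt_le c')
    have hxm' : x - 1 < m := by omega
    have hlr : c' ≤ lam ⟨x - 1, hxm'⟩ := by
      have := (lt_colCt_iff hmk hPmono hPrange hPidx hlam' c' ⟨x - 1, hxm'⟩).mpr
      simp only [] at this
      exact this (by omega)
    have hProw : P ⟨x - 1, hxm'⟩ ≤ 2 * n - v :=
      (lam_row_iff j v x c' hqv hvp hv1 hvn hx1 hxm' hcd).mp hlr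
    have hxP : x ≤ cnt P (2 * n - v) := by
      have := (le_iff_lt_cnt hPmono (2 * n - v) ⟨x - 1, hxm'⟩).mp hProw
      simp only [] at this
      omega
    rcases lt_or_ge x m with hxlt | hxge
    · set rowx : Fin m := ⟨x, hxlt⟩ with hrowx
      have hmux : mu rowx < c' := by
        by_contra hcon
        have := (lt_colCt_iff hmk hQmono hQrange hQidx hmu' c' rowx).mp (by omega)
        simp only [hrowx] at this
        omega
      have hQrow : 2 * n - v < Q rowx :=
        (mu_row_iff j v c' rowx hqv hvp hv1 hvn hck (by simp [hrowx]; omega)).mp hmux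
      have : cnt Q (2 * n - v) ≤ x := by
        by_contra hcon
        have := (le_iff_lt_cnt hQmono (2 * n - v) rowx).mpr (by simp [hrowx]; omega)
        omega
      omega
    · have := cnt_le (R := Q) (2 * n - v)
      omega
  -- `Mentioned` is equivalent to `2n - v` being a cut
  have mentioned_iff : ∀ (j : Fin m) (v : ℕ), Q j ≤ v → v < P j → 1 ≤ v → v ≤ n →
      (Mentioned k lam mu (j, n + k + 1 - v) ↔ cnt Q (2 * n - v) ≤ cnt P (2 * n - v)) := by
    intro j v hqv hvp hv1 hvn
    obtain ⟨hcP, hcQ⟩ := cnt_eq_row hqv hvp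
    constructor
    · rintro (⟨c', hc1, hck, hML, j', hj', hkrel⟩ | ⟨c', hc1, hML, j', hdisj, hkrel⟩)
      · -- condition (1)
        unfold KRel at hkrel
        rw [absk, absk] at hkrel
        rw [if_pos (by omega : k + 1 ≤ n + k + 1 - v), if_neg (by omega : ¬ (k + 1 ≤ c'))]
          at hkrel
        have hcd : c' + n + 1 + (j : ℕ) = k + 1 + ((j' : ℕ) + 1) + v := by
          push_cast at hkrel
          omega
        exact ment_core j v c' ((j' : ℕ) + 1) hqv hvp hv1 hvn (by omega) (by omega)
          (by omega) (by omega) hcd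
      · -- condition (2)
        have hck : c' ≤ k := by
          by_contra hcon
          have := high_cols c' (by omega)
          omega
        unfold KRel at hkrel
        rw [absk, absk] at hkrel
        rw [if_pos (by omega : k + 1 ≤ n + k + 1 - v), if_neg (by omega : ¬ (k + 1 ≤ c'))]
          at hkrel
        have hcd : c' + n + 1 + (j : ℕ) = k + 1 + ((j' : ℕ) + 1) + v := by
          push_cast at hkrel
          omega
        rcases hdisj with ⟨h1, h2⟩ | h1
        · exact ment_core j v c' ((j' : ℕ) + 1) hqv hvp hv1 hvn hck (by omega)
            (by omega) (by omega) hcd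
        · exact ment_core j v c' ((j' : ℕ) + 1) hqv hvp hv1 hvn hck (by omega)
            (by omega) (by omega) hcd
    · -- cut → mentioned
      intro hcut
      set X := cnt P (2 * n - v) with hX
      have hqw : (j : ℕ) + 1 ≤ cnt Q (2 * n - v) := by
        have := cnt_mono (R := Q) (x := v) (y := 2 * n - v) (by omega)
        omega
      have hX1 : 1 ≤ X := by omega
      have hXd : X + v ≤ (j : ℕ) + n := by
        have := pair2 hPmono hPrange hPidx (v := v) hvn
        omega
      have hXk : (j : ℕ) + 1 + m ≤ v + X := by
        have := pair1 hQmono hQrange hQidx (v := v) hvn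
        omega
      set c' : ℕ := k + 1 + X + v - (n + 1 + (j : ℕ)) with hc'
      have hc'eq : c' + n + 1 + (j : ℕ) = k + 1 + X + v := by omega
      have hc'1 : 1 ≤ c' := by omega
      have hc'k : c' ≤ k := by omega
      have hXm : X ≤ m := cnt_le _
      have hXm' : X - 1 < m := by omega
      have hProw : P ⟨X - 1, hXm'⟩ ≤ 2 * n - v := row_le_of_le_cnt hPmono hX1 le_rfl
      have hlr : c' ≤ lam ⟨X - 1, hXm'⟩ :=
        (lam_row_iff j v X c' hqv hvp hv1 hvn hX1 hXm' hc'eq).mpr hProw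
      have hL : X ≤ colCt lam c' := by
        have := (lt_colCt_iff hmk hPmono hPrange hPidx hlam' c' ⟨X - 1, hXm'⟩).mp hlr
        simp only [] at this
        omega
      have hM : colCt mu c' ≤ X := by
        by_contra hcon
        have hXlt : X < m := by
          have := colCt_le (part := mu) c'
          omega
        set rowx : Fin m := ⟨X, hXlt⟩ with hrowx
        have hmu_ge : c' ≤ mu rowx :=
          (lt_colCt_iff hmk hQmono hQrange hQidx hmu' c' rowx).mpr (by simp [hrowx]; omega)
        have hQgt : 2 * n - v < Q rowx := by
          by_contra hcon2
          have := (le_iff_lt_cnt hQmono (2 * n - v) rowx).mp (by omega)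
          simp only [hrowx] at this
          omega
        have := (mu_row_iff j v c' rowx hqv hvp hv1 hvn hc'k
          (by simp [hrowx]; omega)).mpr hQgt
        omega
      have hkrel : KRel k ((j : Fin m), n + k + 1 - v) (⟨X - 1, hXm'⟩, c') := by
        unfold KRel
        rw [absk, absk]
        rw [if_pos (by omega : k + 1 ≤ n + k + 1 - v), if_neg (by omega : ¬ (k + 1 ≤ c'))]
        push_cast
        omega
      rcases eq_or_lt_of_le (le_trans hM hL) with heq | hlt
      · -- M = L : condition (1)
        left
        have hXM : X = colCt mu c' := by omega
        exact ⟨c', hc'1, hc'k, heq, ⟨X - 1, hXm'⟩, by simp only []; omega, hkrel⟩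
      · -- M < L : condition (2)
        right
        refine ⟨c', hc'1, hlt, ⟨X - 1, hXm'⟩, ?_, hkrel⟩
        rcases eq_or_lt_of_le hM with heq2 | hlt2
        · right; simp only []; omega
        · left; constructor <;> (simp only []; omega)
  -- membership in the set 𝔸
  have memA_iff : ∀ (j : Fin m) (v : ℕ), 1 ≤ v → v ≤ n →
      ((j, n + k + 1 - v) ∈ ASet n k lam mu ↔
        (Q j ≤ v ∧ v < P j ∧ cnt P (2 * n - v) < cnt Q (2 * n - v))) := by
    intro j v hv1 hvn
    constructor
    · rintro ⟨⟨hsk1, hsk2⟩, hc1, hc2, hnm⟩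
      simp only [] at hsk1 hsk2 hc1 hc2
      have hQn : Q j ≤ n := by
        by_contra hcon
        have := part_big_le_k hmk hQmono hQrange hQidx hmu' (j := j) (by omega)
        omega
      have hdq := dd_small hQmono hQrange hQidx (j := j) hQn
      have hmj := hmuA j
      have hqv : Q j ≤ v := by omega
      have hlj := hlamA j
      have hvp : v < P j := by omega
      refine ⟨hqv, hvp, ?_⟩
      by_contra hcon
      exact hnm ((mentioned_iff j v hqv hvp hv1 hvn).mpr (by omega))
    · rintro ⟨hqv, hvp, hnc⟩
      have hQn : Q j ≤ n := by omega
      have hdq := dd_small hQmono hQrange hQidx (j := j) hQn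
      have hmj := hmuA j
      have hlj := hlamA j
      obtain ⟨hcP, hcQ⟩ := cnt_eq_row hqv hvp
      have hlam_lt : lam j < n + k + 1 - v := by
        rcases le_or_gt (P j) (2 * n - v) with hle | hgt
        · have hdp : dd n P j = 0 := by
            unfold dd
            rw [Finset.card_eq_zero, Finset.filter_eq_empty_iff]
            intro i _
            rintro ⟨hij, hsum⟩
            have := chainPQ i j hij
            omega
          omega
        · have hbig : n + 1 ≤ P j := by omega
          have hK := K_gt hPmono hPrange hPidx (v := v) (i := j) hgt hv1 hvn
          have hdb := dd_big hPmono hPrange hPidx (j := j) hbig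
          omega
      refine ⟨⟨by simpa using hlam_lt, by simp only []; omega⟩, by simp only []; omega,
        by simp only []; omega, ?_⟩
      intro hm
      have := (mentioned_iff j v hqv hvp hv1 hvn).mp hm
      omega
  -- value of a box, membership data
  have A_val : ∀ b ∈ ASet n k lam mu, ∃ v : ℕ, 1 ≤ v ∧ v ≤ n ∧ b.2 = n + k + 1 - v ∧
      Q b.1 ≤ v ∧ v < P b.1 ∧ cnt P v < cnt Q v ∧ cnt P (2 * n - v) < cnt Q (2 * n - v) := by
    intro b hb
    have hc1 : k + 1 ≤ b.2 := hb.2.1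
    have hc2 : b.2 ≤ k + n := hb.2.2.1
    set v := n + k + 1 - b.2 with hv
    have hv1 : 1 ≤ v := by omega
    have hvn : v ≤ n := by omega
    have hbeq : b = (b.1, n + k + 1 - v) := by
      rw [Prod.ext_iff]
      constructor
      · rfl
      · simp only []; omega
    rw [hbeq] at hb
    obtain ⟨hqv, hvp, hnc⟩ := (memA_iff b.1 v hv1 hvn).mp hb
    exact ⟨v, hv1, hvn, by omega, hqv, hvp, noncut_iff.mp ⟨b.1, hqv, hvp⟩, hnc⟩
  -- the "good" values: `v` and `2n-v` are both non-cuts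
  set good : ℕ → Prop := fun v => 1 ≤ v ∧ v ≤ n ∧ cnt P v < cnt Q v ∧
    cnt P (2 * n - v) < cnt Q (2 * n - v) with hgood
  have exists_row : ∀ v, good v → ∃ j : Fin m, Q j ≤ v ∧ v < P j := by
    intro v hv
    exact noncut_iff.mpr hv.2.2.1
  -- a canonical box for each good value
  set rowOf : ∀ v, good v → Fin m := fun v hv => (exists_row v hv).choose with hrowOf
  have rowOf_spec : ∀ v (hv : good v), Q (rowOf v hv) ≤ v ∧ v < P (rowOf v hv) :=
    fun v hv => (exists_row v hv).choose_spec
  set box : ∀ v, good v → Fin m × ℕ := fun v hv => (rowOf v hv, n + k + 1 - v) with hbox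
  have box_mem : ∀ v (hv : good v), box v hv ∈ ASet n k lam mu := by
    intro v hv
    obtain ⟨h1, h2⟩ := rowOf_spec v hv
    exact (memA_iff (rowOf v hv) v hv.1 hv.2.1).mpr ⟨h1, h2, hv.2.2.2⟩
  have val_good : ∀ b ∈ ASet n k lam mu, good (n + k + 1 - b.2) := by
    intro b hb
    obtain ⟨v, hv1, hvn, hbv, hq, hp, hn1, hn2⟩ := A_val b hb
    have : n + k + 1 - b.2 = v := by omega
    rw [this]
    exact ⟨hv1, hvn, hn1, hn2⟩
  have box_unique : ∀ b ∈ ASet n k lam mu, ∀ v (hv : good v), b.2 = n + k + 1 - v →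
      b = box v hv := by
    intro b hb v hv hb2
    obtain ⟨v', hv1, hvn, hbv, hq, hp, hn1, hn2⟩ := A_val b hb
    have hvv : v' = v := by omega
    subst hvv
    obtain ⟨h1, h2⟩ := rowOf_spec v' hv
    have : b.1 = rowOf v' hv := row_unique hq hp h1 h2
    rw [Prod.ext_iff]
    exact ⟨this, by simp only [hbox]; omega⟩
  -- adjacency of boxes with nearby values
  have adj_boxes : ∀ b b', b ∈ ASet n k lam mu → b' ∈ ASet n k lam mu →
      ((n + k + 1 - b.2) + 1 = n + k + 1 - b'.2 ∨ n + k + 1 - b.2 = n + k + 1 - b'.2 ∨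
        n + k + 1 - b.2 = (n + k + 1 - b'.2) + 1) → AdjBox b b' := by
    intro b b' hb hb' hvv
    obtain ⟨v, hv1, hvn, hbv, hq, hp, _, _⟩ := A_val b hb
    obtain ⟨v', hv1', hvn', hbv', hq', hp', _, _⟩ := A_val b' hb'
    have hcols : b.2 = n + k + 1 - v ∧ b'.2 = n + k + 1 - v' := ⟨hbv, hbv'⟩
    have hvv' : v + 1 = v' ∨ v = v' ∨ v = v' + 1 := by omega
    have hrows : ((b.1 : ℕ) + 1 = (b'.1 : ℕ) ∨ (b.1 : ℕ) = (b'.1 : ℕ) ∨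
        (b.1 : ℕ) = (b'.1 : ℕ) + 1 ∨ b.1 = b'.1) := by
      have key : ∀ (i i' : Fin m) (u : ℕ), Q i ≤ u → u < P i → Q i' ≤ u + 1 → u + 1 < P i' →
          (i : ℕ) = (i' : ℕ) ∨ (i : ℕ) + 1 = (i' : ℕ) := by
        intro i i' u h1 h2 h3 h4
        have hle : (i : ℕ) ≤ (i' : ℕ) := by
          by_contra hcon
          have := chainPQ i' i (by omega)
          omega
        rcases eq_or_lt_of_le hle with h | h
        · left; exact h
        · right
          by_contra hcon
          have hi1 : (i : ℕ) + 1 < m := by have := i'.isLt; omega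
          have ha := chainPQ ⟨(i : ℕ) + 1, hi1⟩ i' (by simp [Fin.lt_def]; omega)
          have hb2 := hPmono (show i < ⟨(i : ℕ) + 1, hi1⟩ by simp [Fin.lt_def])
          omega
      rcases hvv' with h | h | h
      · rcases key b.1 b'.1 v hq hp (by omega) (by omega) with h' | h'
        · right; right; right; exact Fin.ext h'
        · left; exact h'
      · have : v' = v := by omega
        subst this
        right; right; right; exact row_unique hq hp hq' hp'
      · rcases key b'.1 b.1 v' hq' hp' (by omega) (by omega) with h' | h'
        · right; right; right; exact Fin.ext h'.symm
        · right; right; left; exact h'.symm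
    unfold AdjBox
    constructor
    · rcases hrows with h | h | h | h
      · omega
      · omega
      · omega
      · rw [h]; simp
    · have h1 : k + 1 ≤ b.2 := hb.2.1
      have h2 : k + 1 ≤ b'.2 := hb'.2.1
      omega
  set A := ASet n k lam mu with hA
  -- symmetry of the step relation
  have step_symm : ∀ x y : Fin m × ℕ, (x ∈ A ∧ y ∈ A ∧ AdjBox x y) →
      (y ∈ A ∧ x ∈ A ∧ AdjBox y x) := by
    intro x y ⟨h1, h2, h3⟩
    refine ⟨h2, h1, ?_⟩
    unfold AdjBox at *
    omega
  have conn_symm : ∀ x y, ConnIn A x y → ConnIn A y x := by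
    intro x y h
    exact haveI : Std.Symm (fun a b : Fin m × ℕ => a ∈ A ∧ b ∈ A ∧ AdjBox a b) := ⟨fun a b hab => step_symm a b hab⟩; (Relation.ReflTransGen.stdSymm (r := fun a b : Fin m × ℕ => a ∈ A ∧ b ∈ A ∧ AdjBox a b)).symm x y h
  have conn_trans : ∀ x y z, ConnIn A x y → ConnIn A y z → ConnIn A x z :=
    fun x y z h1 h2 => Relation.ReflTransGen.trans h1 h2
  -- connectivity along a run of good values
  have conn_run : ∀ (v d : ℕ) (hrun : ∀ u, v ≤ u → u ≤ v + d → good u),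
      ConnIn A (box v (hrun v le_rfl (by omega))) (box (v + d) (hrun (v + d) (by omega) le_rfl)) := by
    intro v d
    induction d with
    | zero => intro hrun; exact Relation.ReflTransGen.refl
    | succ d ih =>
      intro hrun
      have hrun' : ∀ u, v ≤ u → u ≤ v + d → good u := fun u h1 h2 => hrun u h1 (by omega)
      have h1 := ih hrun'
      have hgd : good (v + d) := hrun (v + d) (by omega) (by omega)
      have hgd1 : good (v + d + 1) := hrun (v + d + 1) (by omega) (by omega)
      refine Relation.ReflTransGen.tail h1
        ⟨box_mem (v + d) hgd, box_mem (v + d + 1) hgd1, ?_⟩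
      apply adj_boxes (box (v + d) hgd) (box (v + d + 1) hgd1)
        (box_mem (v + d) hgd) (box_mem (v + d + 1) hgd1)
      left
      have e1 : (box (v + d) hgd).2 = n + k + 1 - (v + d) := rfl
      have e2 : (box (v + d + 1) hgd1).2 = n + k + 1 - (v + d + 1) := rfl
      have := hgd.2.1
      have := hgd1.2.1
      omega
  -- values along a connected set form an interval of good values
  have conn_good_interval : ∀ x y, x ∈ A → ConnIn A x y → ∀ u,
      min (n + k + 1 - x.2) (n + k + 1 - y.2) ≤ u →
      u ≤ max (n + k + 1 - x.2) (n + k + 1 - y.2) → good u := by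
    intro x y hx hconn
    induction hconn with
    | refl =>
      intro u h1 h2
      have hg := val_good x hx
      have : u = n + k + 1 - x.2 := by omega
      rw [this]; exact hg
    | tail hbc hstep ih =>
      rename_i b y' 
      obtain ⟨hbA, hyA, hadj⟩ := hstep
      intro u h1 h2
      have hvb : good (n + k + 1 - b.2) := val_good b hbA
      have hvy : good (n + k + 1 - y'.2) := val_good y' hyA
      have hcolb : k + 1 ≤ b.2 ∧ b.2 ≤ k + n := ⟨hbA.2.1, hbA.2.2.1⟩
      have hcoly : k + 1 ≤ y'.2 ∧ y'.2 ≤ k + n := ⟨hyA.2.1, hyA.2.2.1⟩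
      have hadj2 := hadj.2
      by_cases hcase : min (n + k + 1 - x.2) (n + k + 1 - b.2) ≤ u ∧
          u ≤ max (n + k + 1 - x.2) (n + k + 1 - b.2)
      · exact ih u hcase.1 hcase.2
      · have : u = n + k + 1 - y'.2 := by unfold AdjBox at hadj; omega
        rw [this]; exact hvy
  -- translation of membership in `ISet`
  have mem_ISet_iff : ∀ c : ℕ, c ≤ n →
      (c ∈ ISet n P Q ↔ (cnt Q c ≤ cnt P c ∨ cnt Q (2 * n - c) ≤ cnt P (2 * n - c))) := by
    intro c hc
    have h1 := cut_iff (w := c) (by omega)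
    have h2 := cut_iff (w := 2 * n - c) (by omega)
    simp only [ISet, Set.mem_setOf_eq]
    constructor
    · rintro ⟨_, h | h⟩
      · left; exact h1.mp h
      · right; exact h2.mp h
    · rintro (h | h)
      · exact ⟨hc, Or.inl (h1.mpr h)⟩
      · exact ⟨hc, Or.inr (h2.mpr h)⟩
  have good_iff_notI : ∀ c : ℕ, 1 ≤ c → c ≤ n → (good c ↔ c ∉ ISet n P Q) := by
    intro c h1 h2
    rw [mem_ISet_iff c h2]
    constructor
    · intro hg
      push_neg
      exact ⟨by omega, by have := hg.2.2.2; omega⟩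
    · intro hni
      push_neg at hni
      exact ⟨h1, h2, by omega, by omega⟩
  have ISet_le : ∀ c : ℕ, c ∈ ISet n P Q → c ≤ n := fun c hc => hc.1
  -- the two counted sets are in bijection
  have good_of : ∀ c : ℕ, c ∈ ISet n P Q → 2 ≤ c → (c - 1) ∉ ISet n P Q → good (c - 1) :=
    fun c h1 h2 h3 =>
      (good_iff_notI (c - 1) (by omega) (by have := ISet_le c h1; omega)).mpr h3
  have hcol_prop : ∀ (c : ℕ) (hc : good (c - 1)), c ∈ ISet n P Q →
      ∀ x ∈ {x | x ∈ A ∧ ConnIn A (box (c - 1) hc) x}, x.2 ≠ k + 1 := by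
    intro c hc hcI x hx hxcol
    obtain ⟨hxA, hxconn⟩ := hx
    have hcn := ISet_le c hcI
    have hint := conn_good_interval (box (c - 1) hc) x (box_mem _ hc) hxconn
    have hbv : (box (c - 1) hc).2 = n + k + 1 - (c - 1) := rfl
    have hxcols : k + 1 ≤ x.2 ∧ x.2 ≤ k + n := ⟨hxA.2.1, hxA.2.2.1⟩
    have hc1n : c - 1 ≤ n := hc.2.1
    have hgc : good c := hint c (by omega) (by omega)
    exact ((good_iff_notI c (by omega) hcn).mp hgc) hcI
  set F : {c : ℕ // c ∈ ISet n P Q ∧ 2 ≤ c ∧ (c - 1) ∉ ISet n P Q} →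
      {S : Set (Fin m × ℕ) // (∃ b ∈ ASet n k lam mu,
        S = {x | x ∈ ASet n k lam mu ∧ ConnIn (ASet n k lam mu) b x}) ∧
        ∀ x ∈ S, x.2 ≠ k + 1} :=
    fun a => ⟨{x | x ∈ A ∧ ConnIn A (box (a.1 - 1) (good_of a.1 a.2.1 a.2.2.1 a.2.2.2)) x},
      ⟨box (a.1 - 1) (good_of a.1 a.2.1 a.2.2.1 a.2.2.2),
        box_mem (a.1 - 1) (good_of a.1 a.2.1 a.2.2.1 a.2.2.2), rfl⟩,
      hcol_prop a.1 (good_of a.1 a.2.1 a.2.2.1 a.2.2.2) a.2.1⟩ with hF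
  have hinj : Function.Injective F := by
    intro a b hab
    apply Subtype.ext
    by_contra hne
    have hseteq : {x | x ∈ A ∧ ConnIn A (box (a.1 - 1)
          (good_of a.1 a.2.1 a.2.2.1 a.2.2.2)) x}
        = {x | x ∈ A ∧ ConnIn A (box (b.1 - 1) (good_of b.1 b.2.1 b.2.2.1 b.2.2.2)) x} :=
      congrArg Subtype.val hab
    have hmem : box (a.1 - 1) (good_of a.1 a.2.1 a.2.2.1 a.2.2.2)
        ∈ {x | x ∈ A ∧ ConnIn A (box (a.1 - 1) (good_of a.1 a.2.1 a.2.2.1 a.2.2.2)) x} :=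
      ⟨box_mem (a.1 - 1) (good_of a.1 a.2.1 a.2.2.1 a.2.2.2), Relation.ReflTransGen.refl⟩
    rw [hseteq] at hmem
    obtain ⟨hmA, hconn⟩ := hmem
    have hint := conn_good_interval _ _ (box_mem (b.1 - 1)
      (good_of b.1 b.2.1 b.2.2.1 b.2.2.2)) hconn
    have e1 : (box (a.1 - 1) (good_of a.1 a.2.1 a.2.2.1 a.2.2.2)).2
        = n + k + 1 - (a.1 - 1) := rfl
    have e2 : (box (b.1 - 1) (good_of b.1 b.2.1 b.2.2.1 b.2.2.2)).2
        = n + k + 1 - (b.1 - 1) := rfl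
    have han := ISet_le a.1 a.2.1
    have hbn := ISet_le b.1 b.2.1
    have ha2 := a.2.2.1
    have hb2 := b.2.2.1
    rw [e1, e2] at hint
    rcases lt_trichotomy a.1 b.1 with h | h | h
    · have hga : good a.1 := hint a.1 (by omega) (by omega)
      exact ((good_iff_notI a.1 (by omega) han).mp hga) a.2.1
    · exact hne h
    · have hgb : good b.1 := hint b.1 (by omega) (by omega)
      exact ((good_iff_notI b.1 (by omega) hbn).mp hgb) b.2.1
  have hsurj : Function.Surjective F := by
    rintro ⟨S, ⟨b, hbA, hSeq⟩, hcolS⟩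
    have hgv : good (n + k + 1 - b.2) := val_good b hbA
    set v := n + k + 1 - b.2 with hv
    have hgap : ∃ d, ¬ good (v + d + 1) := by
      refine ⟨n, fun hcon => ?_⟩
      have := hcon.2.1
      have := hgv.1
      omega
    set d₀ := Nat.find hgap with hd₀
    have hrun : ∀ u, v ≤ u → u ≤ v + d₀ → good u := by
      intro u h1 h2
      rcases Nat.lt_or_ge u (v + 1) with h | h
      · have : u = v := by omega
        rw [this]; exact hgv
      · have hlt : u - v - 1 < d₀ := by omega
        have h2' := Nat.find_min hgap hlt
        have heq : v + (u - v - 1) + 1 = u := by omega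
        rw [heq] at h2'
        exact not_not.mp h2'
    have hge : good (v + d₀) := hrun (v + d₀) (by omega) le_rfl
    have hnge : ¬ good (v + d₀ + 1) := Nat.find_spec hgap
    have hbbox : b = box v hgv := box_unique b hbA v hgv (by
      have : k + 1 ≤ b.2 ∧ b.2 ≤ k + n := ⟨hbA.2.1, hbA.2.2.1⟩
      omega)
    have hconn_ve : ConnIn A (box v hgv) (box (v + d₀) hge) := conn_run v d₀ hrun
    have hconn_b : ConnIn A b (box (v + d₀) hge) := by
      have h0 := hconn_ve
      rw [← hbbox] at h0
      exact h0
    have he_lt : v + d₀ < n := by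
      by_contra hcon
      have hen : v + d₀ = n := by have := hge.2.1; omega
      have hboxe_mem : box (v + d₀) hge ∈ S := by
        rw [hSeq]
        exact ⟨box_mem (v + d₀) hge, hconn_b⟩
      have hne1 := hcolS (box (v + d₀) hge) hboxe_mem
      have heqcol : (box (v + d₀) hge).2 = k + 1 := by
        show n + k + 1 - (v + d₀) = k + 1
        omega
      exact hne1 heqcol
    have hv1 : 1 ≤ v := hgv.1
    have hcI : v + d₀ + 1 ∈ ISet n P Q := by
      by_contra hcon
      exact hnge ((good_iff_notI (v + d₀ + 1) (by omega) (by omega)).mpr hcon)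
    have hcm1 : (v + d₀ + 1) - 1 ∉ ISet n P Q :=
      (good_iff_notI (v + d₀) (by omega) (by omega)).mp hge
    refine ⟨⟨v + d₀ + 1, hcI, by omega, hcm1⟩, ?_⟩
    apply Subtype.ext
    show {x | x ∈ A ∧ ConnIn A (box (v + d₀ + 1 - 1)
      (good_of (v + d₀ + 1) hcI (by omega) hcm1)) x} = S
    rw [hSeq]
    have hbe : ConnIn A b (box (v + d₀ + 1 - 1)
        (good_of (v + d₀ + 1) hcI (by omega) hcm1)) := hconn_b
    ext x
    constructor
    · rintro ⟨hxA, hxconn⟩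
      exact ⟨hxA, conn_trans _ _ _ hbe hxconn⟩
    · rintro ⟨hxA, hxconn⟩
      exact ⟨hxA, conn_trans _ _ _ (conn_symm _ _ hbe) hxconn⟩
  unfold NIdx NPart
  exact Nat.card_eq_of_bijective F ⟨hinj, hsurj⟩
end

section
/- Fix integers 0 ≤ k ≤ n and set m = n − k. Let P = {p_1 < ⋯ < p_m} and Q = {q_1 < ⋯ < q_m} be index sets with P → Q, and let λ → μ be the corresponding k-strict partitions. Then for every integer 0 ≤ e ≤ n−1: e ∈ J(P,Q) if and only if the set 𝔸 contains a box in column k+1+e. -/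
/-! ### Auxiliary counting machinery -/

/-- `NN P v` = number of entries of `P` that are `≤ v`. -/
def NN {m : ℕ} (P : Fin m → ℕ) (v : ℕ) : ℕ :=
  (Finset.univ.filter fun j : Fin m => P j ≤ v).card

lemma NN_mono {m : ℕ} (P : Fin m → ℕ) {v w : ℕ} (h : v ≤ w) : NN P v ≤ NN P w := by
  apply Finset.card_le_card
  intro j hj
  simp only [Finset.mem_filter, Finset.mem_univ, true_and] at *
  omega

lemma NN_le {m : ℕ} (P : Fin m → ℕ) (v : ℕ) : NN P v ≤ m := by
  have := Finset.card_filter_le Finset.univ (fun j : Fin m => P j ≤ v)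
  simpa [NN] using this

lemma NN_zero {m : ℕ} (P : Fin m → ℕ) (h1 : ∀ j, 1 ≤ P j) : NN P 0 = 0 := by
  simp only [NN, Finset.card_eq_zero, Finset.filter_eq_empty_iff]
  intro j _
  have := h1 j; omega

lemma NN_top {m n : ℕ} (P : Fin m → ℕ) (h2 : ∀ j, P j ≤ 2 * n) : NN P (2 * n) = m := by
  simp only [NN]
  rw [Finset.filter_true_of_mem (fun j _ => h2 j)]
  simp

lemma le_NN_iff {m : ℕ} {P : Fin m → ℕ} (hP : StrictMono P) (v : ℕ) (j : Fin m) :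
    P j ≤ v ↔ (j : ℕ) < NN P v := by
  constructor
  · intro h
    have hsub : Finset.Iic j ⊆ Finset.univ.filter fun i : Fin m => P i ≤ v := by
      intro i hi
      simp only [Finset.mem_Iic] at hi
      simp only [Finset.mem_filter, Finset.mem_univ, true_and]
      exact le_trans (hP.monotone hi) h
    have := Finset.card_le_card hsub
    rw [Fin.card_Iic] at this
    simpa [NN] using this
  · intro h
    by_contra hc
    push_neg at hc
    have hsub : (Finset.univ.filter fun i : Fin m => P i ≤ v) ⊆ Finset.Iio j := by
      intro i hi
      simp only [Finset.mem_filter] at hi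
      simp only [Finset.mem_Iio]
      exact hP.lt_iff_lt.mp (lt_of_le_of_lt hi.2 hc)
    have := Finset.card_le_card hsub
    rw [Fin.card_Iio] at this
    simp only [NN] at h
    omega

lemma NN_split {m : ℕ} (P : Fin m → ℕ) {a b : ℕ} (hab : a ≤ b) :
    NN P b = NN P a + (Finset.univ.filter fun j : Fin m => a < P j ∧ P j ≤ b).card := by
  classical
  simp only [NN]
  rw [← Finset.card_union_of_disjoint]
  · congr 1
    ext j
    simp only [Finset.mem_union, Finset.mem_filter, Finset.mem_univ, true_and]
    omega
  · rw [Finset.disjoint_filter]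
    intro j _ h1 h2
    omega

/-- The key pairing bound: the annulus `(n-d, n-e] ∪ (n+e, n+d]` contains at
most `d - e` entries of `P`, since `P` avoids complementary pairs. -/
lemma annulus {m n : ℕ} {P : Fin m → ℕ} (hP : StrictMono P)
    (hPidx : ∀ i j, P i + P j ≠ 2 * n + 1) {e d : ℕ} (hed : e ≤ d) (hdn : d ≤ n) :
    NN P (n + d) + NN P (n - e) ≤ NN P (n + e) + NN P (n - d) + (d - e) := by
  classical
  have h1 : NN P (n + d) = NN P (n + e) +
      (Finset.univ.filter fun j : Fin m => n + e < P j ∧ P j ≤ n + d).card :=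
    NN_split P (by omega)
  have h2 : NN P (n - e) = NN P (n - d) +
      (Finset.univ.filter fun j : Fin m => n - d < P j ∧ P j ≤ n - e).card :=
    NN_split P (by omega)
  rw [h1, h2]
  have key : (Finset.univ.filter fun j : Fin m => n + e < P j ∧ P j ≤ n + d).card
      + (Finset.univ.filter fun j : Fin m => n - d < P j ∧ P j ≤ n - e).card ≤ d - e := by
    rw [← Finset.card_union_of_disjoint]
    · have hsub : ∀ j ∈ ((Finset.univ.filter fun j : Fin m => n + e < P j ∧ P j ≤ n + d) ∪
          (Finset.univ.filter fun j : Fin m => n - d < P j ∧ P j ≤ n - e)),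
          (if P j ≤ n then n + 1 - P j else P j - n) ∈ Finset.Icc (e + 1) d := by
        intro j hj
        simp only [Finset.mem_union, Finset.mem_filter, Finset.mem_univ, true_and] at hj
        simp only [Finset.mem_Icc]
        split <;> omega
      have hinj : Set.InjOn (fun j : Fin m => if P j ≤ n then n + 1 - P j else P j - n)
          (((Finset.univ.filter fun j : Fin m => n + e < P j ∧ P j ≤ n + d) ∪
          (Finset.univ.filter fun j : Fin m => n - d < P j ∧ P j ≤ n - e) :
            Finset (Fin m)) : Set (Fin m)) := by
        intro j1 hj1 j2 hj2 hf
        simp only [Finset.coe_union] at hj1 hj2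
        simp only [Set.mem_union, Finset.coe_filter, Set.mem_setOf_eq,
          Finset.mem_univ, true_and] at hj1 hj2
        simp only at hf
        apply hP.injective
        have hs1 := hPidx j1 j2
        have h1' : 1 ≤ P j1 := by rcases hj1 with h | h <;> omega
        have h2' : 1 ≤ P j2 := by rcases hj2 with h | h <;> omega
        by_cases c1 : P j1 ≤ n <;> by_cases c2 : P j2 ≤ n <;>
          simp only [c1, c2, if_true, if_false] at hf <;> omega
      have := Finset.card_le_card_of_injOn _ hsub hinj
      simpa [Nat.card_Icc] using this
    · rw [Finset.disjoint_filter]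
      intro j _ h1 h2
      omega
  omega

lemma cut_iff {m n : ℕ} {P Q : Fin m → ℕ} (hP : StrictMono P) (hQ : StrictMono Q)
    {c : ℕ} (hc : c ≤ 2 * n) : IsCut n P Q c ↔ NN Q c ≤ NN P c := by
  constructor
  · rintro ⟨t, htm, h1, h2⟩
    have hQc : NN Q c ≤ t := by
      by_contra hcon
      push_neg at hcon
      have htm' : t < m := by
        by_contra h
        have : t = m := by omega
        subst this
        simp only [qExt] at h2
        rw [dif_neg (by omega)] at h2
        have := NN_le Q c
        omega
      have : Q ⟨t, htm'⟩ ≤ c := (le_NN_iff hQ c ⟨t, htm'⟩).mpr (by simpa using hcon)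
      simp only [qExt] at h2
      rw [dif_pos (by omega)] at h2
      simp only [Nat.add_sub_cancel] at h2
      omega
    have hPc : t ≤ NN P c := by
      rcases Nat.eq_zero_or_pos t with h | h
      · omega
      · simp only [pExt] at h1
        rw [dif_pos (by omega)] at h1
        have := (le_NN_iff hP c ⟨t - 1, by omega⟩).mp h1
        simp only at this
        omega
    omega
  · intro h
    refine ⟨NN P c, NN_le P c, ?_, ?_⟩
    · rcases Nat.eq_zero_or_pos (NN P c) with h0 | h0
      · simp only [h0, pExt]
        rw [dif_neg (by omega)]
        omega
      · simp only [pExt]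
        rw [dif_pos ⟨h0, NN_le P c⟩]
        exact (le_NN_iff hP c ⟨NN P c - 1, by have := NN_le P c; omega⟩).mpr (by simp; omega)
    · simp only [qExt]
      split
      · next hcond =>
        by_contra hcon
        push_neg at hcon
        have := (le_NN_iff hQ c ⟨NN P c + 1 - 1, by omega⟩).mp hcon
        simp only [Nat.add_sub_cancel] at this
        omega
      · omega

lemma interleave {m : ℕ} {P Q : Fin m → ℕ} (hP : StrictMono P) (hQ : StrictMono Q)
    (h2 : ∀ i j : Fin m, (i : ℕ) + 1 = (j : ℕ) → P i ≤ Q j) (v : ℕ) :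
    NN Q v ≤ NN P v + 1 := by
  by_contra hcon
  push_neg at hcon
  set s := NN P v with hs
  have hsm : s + 1 < m := by have := NN_le Q v; omega
  have hq : Q ⟨s + 1, hsm⟩ ≤ v := (le_NN_iff hQ v ⟨s + 1, hsm⟩).mpr (by simpa using hcon)
  have hp : P ⟨s, by omega⟩ ≤ Q ⟨s + 1, hsm⟩ := h2 _ _ (by simp)
  have := (le_NN_iff hP v ⟨s, by omega⟩).mp (le_trans hp hq)
  simp only at this
  omega

lemma NP_le_NQ {m : ℕ} {P Q : Fin m → ℕ} (h : ∀ j, Q j ≤ P j) (v : ℕ) :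
    NN P v ≤ NN Q v := by
  apply Finset.card_le_card
  intro j hj
  simp only [Finset.mem_filter, Finset.mem_univ, true_and] at *
  exact le_trans (h j) hj

/-- Row value for rows with `P j ≤ n`. -/
lemma row_low {m n k : ℕ} {P : Fin m → ℕ} (hP : StrictMono P) {lam : Fin m → ℕ}
    (hlam : ∀ j : Fin m, (lam j : ℤ) = (n + k + 1 : ℤ) - P j +
      ((Finset.univ.filter fun i : Fin m => i < j ∧ 2 * n + 1 < P i + P j).card : ℤ))
    {j : Fin m} (hj : P j ≤ n) : (lam j : ℤ) = (n + k + 1 : ℤ) - P j := by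
  rw [hlam j]
  have : (Finset.univ.filter fun i : Fin m => i < j ∧ 2 * n + 1 < P i + P j) = ∅ := by
    rw [Finset.filter_eq_empty_iff]
    rintro i - ⟨hij, hsum⟩
    have := hP hij
    omega
  rw [this]
  simp

/-- Row value for rows with `P j > n`, in terms of counts. -/
lemma row_high {m n k : ℕ} {P : Fin m → ℕ} (hP : StrictMono P)
    (hrange : ∀ j, 1 ≤ P j ∧ P j ≤ 2 * n) {lam : Fin m → ℕ}
    (hlam : ∀ j : Fin m, (lam j : ℤ) = (n + k + 1 : ℤ) - P j +
      ((Finset.univ.filter fun i : Fin m => i < j ∧ 2 * n + 1 < P i + P j).card : ℤ))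
    {j : Fin m} (hj : n < P j) :
    (lam j : ℤ) = (k : ℤ) - (P j - n - 1 : ℕ)
      + NN P (n + (P j - n - 1)) - NN P (n - (P j - n - 1)) := by
  set d := P j - n - 1 with hd
  have hPj : P j = n + 1 + d := by have := (hrange j).1; omega
  have hdn : d ≤ n - 1 := by have := (hrange j).2; omega
  have hfe : (Finset.univ.filter fun i : Fin m => i < j ∧ 2 * n + 1 < P i + P j)
      = (Finset.univ.filter fun i : Fin m => n - d < P i ∧ P i ≤ n + d) := by
    ext i
    simp only [Finset.mem_filter, Finset.mem_univ, true_and]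
    rw [← hP.lt_iff_lt]
    omega
  have hsplit := NN_split P (show n - d ≤ n + d by omega)
  rw [hlam j, hfe]
  have h1 : ((Finset.univ.filter fun i : Fin m => n - d < P i ∧ P i ≤ n + d).card : ℤ)
      = (NN P (n + d) : ℤ) - NN P (n - d) := by omega
  rw [h1, hPj]
  push_cast
  ring

/-- Characterization of rows with a box in column `k+1+e`, `0 ≤ e ≤ n-1`. -/
lemma col_gt_k_iff {m n k : ℕ} {P : Fin m → ℕ} (hP : StrictMono P)
    (hrange : ∀ j, 1 ≤ P j ∧ P j ≤ 2 * n)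
    (hPidx : ∀ i j, P i + P j ≠ 2 * n + 1) {lam : Fin m → ℕ}
    (hlam : ∀ j : Fin m, (lam j : ℤ) = (n + k + 1 : ℤ) - P j +
      ((Finset.univ.filter fun i : Fin m => i < j ∧ 2 * n + 1 < P i + P j).card : ℤ))
    {e : ℕ} (he : e < n) (j : Fin m) :
    k + 1 + e ≤ lam j ↔ P j ≤ n - e := by
  by_cases hj : P j ≤ n
  · have h := row_low hP hlam hj
    have h1 := (hrange j).1
    omega
  · push_neg at hj
    have h := row_high hP hrange hlam hj
    have hd : P j - n - 1 ≤ n := by have := (hrange j).2; omega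
    have hA := annulus hP hPidx (Nat.zero_le (P j - n - 1)) hd
    simp only [Nat.add_zero, Nat.sub_zero] at hA
    omega
/-- **The fundamental bijection:** if `P → Q` are index sets for `IG(n−k,2n)`
with associated `k`-strict partitions `λ → μ`, then for `0 ≤ e ≤ n−1` one has
`e ∈ J(P,Q)` (i.e. `n−e` and `n+e` are both crossings) if and only if the set
`𝔸` contains a box in column `k+1+e`. -/
theorem mem_J_iff_ASet_box (n m k : ℕ) (hmk : m + k = n)
    (P Q : Fin m → ℕ)
    (hPmono : StrictMono P) (hPrange : ∀ j, 1 ≤ P j ∧ P j ≤ 2 * n)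
    (hPidx : ∀ i j, P i + P j ≠ 2 * n + 1)
    (hQmono : StrictMono Q) (hQrange : ∀ j, 1 ≤ Q j ∧ Q j ≤ 2 * n)
    (hQidx : ∀ i j, Q i + Q j ≠ 2 * n + 1)
    (harrow : IdxArrow n P Q)
    (lam mu : Fin m → ℕ)
    (hlam : ∀ j : Fin m, (lam j : ℤ) = (n + k + 1 : ℤ) - P j +
      ((Finset.univ.filter fun i : Fin m => i < j ∧ 2 * n + 1 < P i + P j).card : ℤ))
    (hmu : ∀ j : Fin m, (mu j : ℤ) = (n + k + 1 : ℤ) - Q j +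
      ((Finset.univ.filter fun i : Fin m => i < j ∧ 2 * n + 1 < Q i + Q j).card : ℤ))
    (e : ℕ) (he : e + 1 ≤ n) :
    ((¬IsCut n P Q (n - e)) ∧ (¬IsCut n P Q (n + e))) ↔
      ∃ b ∈ ASet n k lam mu, b.2 = k + 1 + e := by
  classical
  obtain ⟨hQP, harr2, -⟩ := harrow
  have hen : e < n := by omega
  rw [cut_iff hPmono hQmono (show n - e ≤ 2 * n by omega),
    cut_iff hPmono hQmono (show n + e ≤ 2 * n by omega), not_le, not_le]
  -- global counting facts
  have hF1 : ∀ v, NN P v ≤ NN Q v := NP_le_NQ hQP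
  have hF2 : NN Q (n - e) ≤ NN P (n - e) + 1 := interleave hPmono hQmono harr2 (n - e)
  have hpairP : NN P (n + e) ≤ NN P (n - e) + e := by
    have := annulus hPmono hPidx (Nat.zero_le e) (le_of_lt hen)
    simp only [Nat.add_zero, Nat.sub_zero] at this
    omega
  have hgqk : e + NN Q (n - e) ≤ NN Q (n + e) + k := by
    have hA := annulus hQmono hQidx (le_of_lt hen) (le_refl n)
    have h2n : n + n = 2 * n := by ring
    have htop := NN_top Q (fun j => (hQrange j).2)
    have hzero := NN_zero Q (fun j => (hQrange j).1)
    rw [h2n, Nat.sub_self] at hA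
    omega
  -- in columns above k, mu has at least as many boxes as lam
  have hbig : ∀ c, k + 1 ≤ c → colCt lam c ≤ colCt mu c := by
    intro c hc
    apply Finset.card_le_card
    intro j hj
    simp only [Finset.mem_filter, Finset.mem_univ, true_and] at *
    by_cases hcn : c ≤ k + n
    · have he'n : c - k - 1 < n := by omega
      have hcc : c = k + 1 + (c - k - 1) := by omega
      rw [hcc] at hj ⊢
      rw [col_gt_k_iff hPmono hPrange hPidx hlam he'n] at hj
      rw [col_gt_k_iff hQmono hQrange hQidx hmu he'n]
      exact le_trans (hQP j) hj
    · exfalso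
      by_cases hjn : P j ≤ n
      · have h1 := row_low hPmono hlam hjn
        have h2 := (hPrange j).1
        omega
      · push_neg at hjn
        have h1 := row_high hPmono hPrange hlam hjn
        have hd : P j - n - 1 ≤ n := by have := (hPrange j).2; omega
        have hA := annulus hPmono hPidx (Nat.zero_le _) hd
        simp only [Nat.add_zero, Nat.sub_zero] at hA
        omega
  have habs1 : |((k + 1 + e : ℕ) : ℤ) - k - 1| = (e : ℤ) := by
    have h : ((k + 1 + e : ℕ) : ℤ) - k - 1 = (e : ℤ) := by push_cast; ring
    rw [h, abs_of_nonneg (by positivity)]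
  have habs2 : ∀ c : ℕ, c ≤ k → |((c : ℕ) : ℤ) - k - 1| = (k : ℤ) + 1 - c := by
    intro c hck
    have h : ((c : ℕ) : ℤ) - k - 1 = -((k : ℤ) + 1 - c) := by ring
    rw [h, abs_neg, abs_of_nonneg (by omega)]
  constructor
  · -- crossings ⟹ box in 𝔸
    rintro ⟨hx1, hx2⟩
    set R' := NN P (n - e) with hR'
    have hR'm : R' < m := lt_of_lt_of_le hx1 (NN_le Q _)
    have hiffP := col_gt_k_iff hPmono hPrange hPidx hlam hen (⟨R', hR'm⟩ : Fin m)
    have hiffQ := col_gt_k_iff hQmono hQrange hQidx hmu hen (⟨R', hR'm⟩ : Fin m)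
    have hPnot : ¬ P ⟨R', hR'm⟩ ≤ n - e := by
      rw [le_NN_iff hPmono]
      simp only [Fin.val_mk]
      omega
    have hQyes : Q ⟨R', hR'm⟩ ≤ n - e := by
      rw [le_NN_iff hQmono]
      simp only [Fin.val_mk]
      omega
    refine ⟨(⟨R', hR'm⟩, k + 1 + e), ⟨⟨?_, ?_⟩, by omega, by omega, ?_⟩, rfl⟩
    · by_contra hcon
      push_neg at hcon
      exact hPnot (hiffP.mp hcon)
    · exact hiffQ.mpr hQyes
    · -- not Mentioned
      intro hM
      have hext : ∃ c : ℕ, 1 ≤ c ∧ c ≤ k ∧ ∃ j0 : Fin m,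
          colCt mu c ≤ (j0 : ℕ) + 1 ∧ (j0 : ℕ) + 1 ≤ colCt lam c ∧
          KRel k ((⟨R', hR'm⟩ : Fin m), k + 1 + e) (j0, c) := by
        rcases hM with ⟨c, h1, h2, h3, j0, h4, h5⟩ | ⟨c, h1, h2, j0, h4, h5⟩
        · exact ⟨c, h1, h2, j0, by omega, by omega, h5⟩
        · have hck : c ≤ k := by
            by_contra hc
            have := hbig c (by omega)
            omega
          exact ⟨c, h1, hck, j0, by omega, by omega, h5⟩
      obtain ⟨c, hc1', hck, j0, hMle, hLge, hkr⟩ := hext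
      unfold KRel at hkr
      simp only [Fin.val_mk] at hkr
      rw [habs1, habs2 c hck] at hkr
      have hJ : (j0 : ℕ) + 1 + k = e + R' + c := by omega
      by_cases hcase : e + R' + c ≤ NN P (n + e) + k
      · -- the mentioned row is too low: contradiction via mu-count
        have hsub : NN Q (n + e) ≤ colCt mu c := by
          apply Finset.card_le_card
          intro j hj
          simp only [Finset.mem_filter, Finset.mem_univ, true_and] at *
          by_cases hjn : Q j ≤ n
          · have := row_low hQmono hmu hjn
            omega
          · push_neg at hjn
            have hrow := row_high hQmono hQrange hmu hjn
            have hdje : Q j - n - 1 < e := by omega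
            have hA := annulus hQmono hQidx (le_of_lt hdje) (le_of_lt hen)
            omega
        omega
      · -- the mentioned row is too high: contradiction via lam-count
        have hsub : colCt lam c ≤ NN P (n + e) := by
          apply Finset.card_le_card
          intro j hj
          simp only [Finset.mem_filter, Finset.mem_univ, true_and] at *
          by_cases hjn : P j ≤ n
          · omega
          · push_neg at hjn
            have hrow := row_high hPmono hPrange hlam hjn
            have hdn : P j - n - 1 ≤ n := by have := (hPrange j).2; omega
            by_contra hcon
            push_neg at hcon
            have hA := annulus hPmono hPidx (show e ≤ P j - n - 1 by omega) hdn
            omega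
        omega
  · -- box in 𝔸 ⟹ crossings
    rintro ⟨⟨r, col⟩, ⟨⟨hsk1, hsk2⟩, hb1, hb2, hnm⟩, hcol⟩
    simp only at hcol hsk1 hsk2
    subst hcol
    have hPr : ¬ P r ≤ n - e := by
      rw [← col_gt_k_iff hPmono hPrange hPidx hlam hen r]
      omega
    have hQr : Q r ≤ n - e := by
      rw [← col_gt_k_iff hQmono hQrange hQidx hmu hen r]
      exact hsk2
    rw [le_NN_iff hQmono] at hQr
    rw [le_NN_iff hPmono] at hPr
    push_neg at hPr
    have hx1 : NN P (n - e) < NN Q (n - e) := by omega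
    refine ⟨hx1, ?_⟩
    by_contra hx2
    push_neg at hx2
    set R' := NN P (n - e) with hR'
    have hrR : (r : ℕ) = R' := by omega
    set t := NN P (n + e) with ht
    have htu : NN Q (n + e) = t := le_antisymm hx2 (hF1 _)
    have hNQ : NN Q (n - e) = R' + 1 := by omega
    have hgpe0 : t ≤ e + R' := by omega
    set x := e + R' - t with hxdef
    have hxk : x + 1 ≤ k := by omega
    set c := k - x with hcdef
    have ht1 : 1 ≤ t := by
      have := NN_mono Q (show n - e ≤ n + e by omega)
      omega
    have htm : t ≤ m := NN_le P _
    have hL : t ≤ colCt lam c := by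
      apply Finset.card_le_card
      intro j hj
      simp only [Finset.mem_filter, Finset.mem_univ, true_and] at *
      by_cases hjn : P j ≤ n
      · have := row_low hPmono hlam hjn
        omega
      · push_neg at hjn
        have hrow := row_high hPmono hPrange hlam hjn
        have hdje : P j - n - 1 < e := by omega
        have hA := annulus hPmono hPidx (le_of_lt hdje) (le_of_lt hen)
        omega
    have hMu : colCt mu c ≤ t := by
      have : colCt mu c ≤ NN Q (n + e) := by
        apply Finset.card_le_card
        intro j hj
        simp only [Finset.mem_filter, Finset.mem_univ, true_and] at *
        by_cases hjn : Q j ≤ n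
        · omega
        · push_neg at hjn
          have hrow := row_high hQmono hQrange hmu hjn
          have hdn : Q j - n - 1 ≤ n := by have := (hQrange j).2; omega
          by_contra hcon
          push_neg at hcon
          have hA := annulus hQmono hQidx (show e ≤ Q j - n - 1 by omega) hdn
          omega
      omega
    have hkrel : KRel k (r, k + 1 + e) ((⟨t - 1, by omega⟩ : Fin m), c) := by
      unfold KRel
      simp only [Fin.val_mk]
      rw [habs1, habs2 c (by omega)]
      omega
    apply hnm
    by_cases heq : colCt mu c = colCt lam c
    · exact Or.inl ⟨c, by omega, by omega, heq,
        ⟨t - 1, by omega⟩, by simp only [Fin.val_mk]; omega, hkrel⟩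
    · exact Or.inr ⟨c, by omega, by omega,
        ⟨t - 1, by omega⟩, by simp only [Fin.val_mk]; omega, hkrel⟩
end

section
/- Let V = ℂ^{2n} with standard basis e_1,…,e_{2n}, equipped with the symplectic form determined by (e_i, e_j) = 0 for i+j ≠ 2n+1, (e_i, e_{2n+1−i}) = 1 for 1 ≤ i ≤ n and (e_i, e_{2n+1−i}) = −1 for n < i ≤ 2n. Set F_i = span(e_1,…,e_i) and G_i = span(e_{2n+1−i},…,e_{2n}). Let P = {p_1 < ⋯ < p_m} and Q = {q_1 < ⋯ < q_m} be index sets with q_j ≤ p_j for all j. Suppose Σ ⊆ V is an m-dimensional isotropic subspace with dim(Σ ∩ F_{p_j}) ≥ j and dim(Σ ∩ G_{2n+1−q_j}) ≥ m+1−j for all 1 ≤ j ≤ m. Then every vector v = ∑_{i=1}^{2n} x_i e_i ∈ Σ satisfies: (a) ∑_{l=c+1}^{d} x_l x_{2n+1−l} = 0 whenever c < d are consecutive elements of I(P,Q) with d − c ≥ 2; (b) x_c = 0 whenever there is no j with q_j ≤ c ≤ p_j; and (c) x_c = 0 whenever there is some j with q_j = p_j = 2n+1−c. -/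
/-- The index pairing `i ↦ 2n-1-i` (0-indexed version of `l ↦ 2n+1-l`). -/
def sigmaFin (n : ℕ) (i : Fin (2 * n)) : Fin (2 * n) :=
  ⟨2 * n - 1 - (i : ℕ), by have := i.isLt; omega⟩

@[simp] lemma sigmaFin_val (n : ℕ) (i : Fin (2 * n)) :
    ((sigmaFin n i : Fin (2 * n)) : ℕ) = 2 * n - 1 - (i : ℕ) := rfl

/-- **Points of `Y_{P,Q}` satisfy the equations of `Z_{P,Q}`.**  Let `V = ℂ^{2n}`
with symplectic basis `e_1,…,e_{2n}`, `F_i = span(e_1,…,e_i)`,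
`G_i = span(e_{2n+1−i},…,e_{2n})`, and let `P`, `Q` be index sets with
`q_j ≤ p_j`.  If `Σ` is an `m`-dimensional isotropic subspace with
`dim(Σ ∩ F_{p_j}) ≥ j` and `dim(Σ ∩ G_{2n+1−q_j}) ≥ m+1−j` for all `j`, then
the coordinates `x_1,…,x_{2n}` of any `v ∈ Σ` satisfy:
(a) `∑_{l=c+1}^{d} x_l x_{2n+1−l} = 0` for consecutive `c < d` in `I(P,Q)` with
`d−c ≥ 2`; (b) `x_c = 0` when no `j` has `q_j ≤ c ≤ p_j`; and (c) `x_c = 0`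
when some `j` has `q_j = p_j = 2n+1−c`. -/
theorem schubert_intersection_equations (n m : ℕ) (V : Type) [AddCommGroup V]
    [Module ℂ V] (e : Module.Basis (Fin (2 * n)) ℂ V)
    (B : V →ₗ[ℂ] V →ₗ[ℂ] ℂ)
    (hB : ∀ i j : Fin (2 * n), B (e i) (e j) =
      if (i : ℕ) + 1 + ((j : ℕ) + 1) = 2 * n + 1 then
        (if (i : ℕ) + 1 ≤ n then 1 else -1) else 0)
    (F G : ℕ → Submodule ℂ V)
    (hF : ∀ i, F i = Submodule.span ℂ (e '' {t : Fin (2 * n) | (t : ℕ) < i}))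
    (hG : ∀ i, G i = Submodule.span ℂ (e '' {t : Fin (2 * n) | 2 * n ≤ (t : ℕ) + i}))
    (P Q : Fin m → ℕ)
    (hPmono : StrictMono P) (hPrange : ∀ j, 1 ≤ P j ∧ P j ≤ 2 * n)
    (hPidx : ∀ i j, P i + P j ≠ 2 * n + 1)
    (hQmono : StrictMono Q) (hQrange : ∀ j, 1 ≤ Q j ∧ Q j ≤ 2 * n)
    (hQidx : ∀ i j, Q i + Q j ≠ 2 * n + 1)
    (hQP : ∀ j, Q j ≤ P j)
    (Sig : Submodule ℂ V) (hdim : Module.finrank ℂ Sig = m)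
    (hiso : ∀ u ∈ Sig, ∀ w ∈ Sig, B u w = 0)
    (hSchubF : ∀ j : Fin m, (j : ℕ) + 1 ≤ Module.finrank ℂ ↥(Sig ⊓ F (P j)))
    (hSchubG : ∀ j : Fin m, m - (j : ℕ) ≤ Module.finrank ℂ ↥(Sig ⊓ G (2 * n + 1 - Q j)))
    (v : V) (hv : v ∈ Sig)
    (x : ℕ → ℂ) (hx : ∀ t : ℕ, 1 ≤ t → ∀ h : t - 1 < 2 * n, x t = e.repr v ⟨t - 1, h⟩) :
    (∀ c d : ℕ, c ∈ ISet n P Q → d ∈ ISet n P Q → c < d →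
      (∀ t ∈ ISet n P Q, ¬(c < t ∧ t < d)) → 2 ≤ d - c →
      ∑ l ∈ Finset.Icc (c + 1) d, x l * x (2 * n + 1 - l) = 0) ∧
    (∀ c : ℕ, 1 ≤ c → c ≤ 2 * n → (∀ j : Fin m, ¬(Q j ≤ c ∧ c ≤ P j)) → x c = 0) ∧
    (∀ c : ℕ, 1 ≤ c → c ≤ 2 * n → (∃ j : Fin m, Q j = P j ∧ P j + c = 2 * n + 1) →
      x c = 0) := by
  classical
  haveI : Module.Finite ℂ V := Module.Finite.of_basis e
  -- the coordinates of v
  have hrepr : ∀ i : Fin (2 * n), x ((i : ℕ) + 1) = e.repr v i := by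
    intro i
    have hlt : (i : ℕ) + 1 - 1 < 2 * n := by have := i.isLt; omega
    rw [hx ((i : ℕ) + 1) (by omega) hlt]
    congr 1
  -- membership in F and G via coordinates
  have hFmem : ∀ (a : ℕ) (z : V), z ∈ F a ↔
      ∀ i : Fin (2 * n), a ≤ (i : ℕ) → e.repr z i = 0 := by
    intro a z
    rw [hF a, Module.Basis.mem_span_image]
    constructor
    · intro h i hi
      by_contra h0
      have h1 := h (Finsupp.mem_support_iff.mpr h0)
      simp only [Set.mem_setOf_eq] at h1
      omega
    · intro h i hi
      simp only [Finset.mem_coe, Finsupp.mem_support_iff] at hi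
      simp only [Set.mem_setOf_eq]
      by_contra h0
      exact hi (h i (by omega))
  have hGmem : ∀ (b : ℕ) (z : V), z ∈ G b ↔
      ∀ i : Fin (2 * n), (i : ℕ) + b < 2 * n → e.repr z i = 0 := by
    intro b z
    rw [hG b, Module.Basis.mem_span_image]
    constructor
    · intro h i hi
      by_contra h0
      have h1 := h (Finsupp.mem_support_iff.mpr h0)
      simp only [Set.mem_setOf_eq] at h1
      omega
    · intro h i hi
      simp only [Finset.mem_coe, Finsupp.mem_support_iff] at hi
      simp only [Set.mem_setOf_eq]
      by_contra h0
      exact hi (h i (by omega))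
  -- the bilinear form in coordinates
  have hBval : ∀ u w : V, B u w = ∑ i : Fin (2 * n),
      e.repr u i * (e.repr w (sigmaFin n i) *
        (if (i : ℕ) + 1 ≤ n then (1 : ℂ) else -1)) := by
    intro u w
    have h1 : B u w = ∑ i : Fin (2 * n), ∑ j : Fin (2 * n),
        e.repr u i * (e.repr w j * B (e i) (e j)) := by
      conv_lhs => rw [← e.sum_repr u, ← e.sum_repr w]
      simp only [map_sum, map_smul, LinearMap.sum_apply, LinearMap.smul_apply, smul_eq_mul,
        Finset.mul_sum]
      rw [Finset.sum_comm]
      exact Finset.sum_congr rfl fun i _ => Finset.sum_congr rfl fun j _ => by ring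
    rw [h1]
    refine Finset.sum_congr rfl fun i _ => ?_
    rw [Finset.sum_eq_single (sigmaFin n i)]
    · rw [hB]
      have hi := i.isLt
      rw [if_pos (by simp only [sigmaFin_val]; omega)]
    · intro j _ hj
      rw [hB, if_neg, mul_zero, mul_zero]
      intro hc
      apply hj
      have hi := i.isLt
      have hjlt := j.isLt
      ext
      simp only [sigmaFin_val]
      omega
    · intro h
      exact absurd (Finset.mem_univ _) h
  -- decomposition lemma
  have hdecomp : ∀ a b : ℕ, a ≤ b → b ≤ 2 * n →
      ∀ t : ℕ, t ≤ m → pExt P t ≤ a → b < qExt n Q (t + 1) →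
      ∃ u w : V, u ∈ Sig ∧ w ∈ Sig ∧ v = u + w ∧
        (∀ i : Fin (2 * n), a ≤ (i : ℕ) → e.repr u i = 0) ∧
        (∀ i : Fin (2 * n), (i : ℕ) < b → e.repr w i = 0) := by
    intro a b hab hb2n t htm hpa hqb
    have h1 : t ≤ Module.finrank ℂ ↥(Sig ⊓ F a) := by
      rcases Nat.eq_zero_or_pos t with rfl | ht
      · exact Nat.zero_le _
      · have hj : t - 1 < m := by omega
        have hple : P ⟨t - 1, hj⟩ ≤ a := by
          have hpe : pExt P t = P ⟨t - 1, hj⟩ := by rw [pExt, dif_pos ⟨ht, htm⟩]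
          omega
        have hFle : F (P ⟨t - 1, hj⟩) ≤ F a := by
          rw [hF, hF]
          apply Submodule.span_mono
          apply Set.image_mono
          intro i hi
          simp only [Set.mem_setOf_eq] at hi ⊢
          omega
        have h2 := hSchubF ⟨t - 1, hj⟩
        have h3 := Submodule.finrank_mono (inf_le_inf_left Sig hFle)
        simp only [Fin.val_mk] at h2
        omega
    have h2 : m - t ≤ Module.finrank ℂ ↥(Sig ⊓ G (2 * n - b)) := by
      rcases Nat.lt_or_ge t m with htm' | htm'
      · have hq : b < Q ⟨t, htm'⟩ := by
          rw [qExt, dif_pos ⟨by omega, by omega⟩] at hqb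
          exact hqb
        have hGle : G (2 * n + 1 - Q ⟨t, htm'⟩) ≤ G (2 * n - b) := by
          rw [hG, hG]
          apply Submodule.span_mono
          apply Set.image_mono
          intro i hi
          simp only [Set.mem_setOf_eq] at hi ⊢
          have := (hQrange ⟨t, htm'⟩).2
          omega
        have h3 := hSchubG ⟨t, htm'⟩
        have h4 := Submodule.finrank_mono (inf_le_inf_left Sig hGle)
        simp only [Fin.val_mk] at h3
        omega
      · have : m - t = 0 := by omega
        rw [this]
        exact Nat.zero_le _
    have h3 : (Sig ⊓ F a) ⊓ (Sig ⊓ G (2 * n - b)) = ⊥ := by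
      rw [eq_bot_iff]
      rintro z ⟨⟨-, hzF⟩, -, hzG⟩
      have hz : ∀ i : Fin (2 * n), e.repr z i = 0 := by
        intro i
        rcases Nat.lt_or_ge (i : ℕ) a with hia | hia
        · exact (hGmem _ z).mp hzG i (by have := i.isLt; omega)
        · exact (hFmem _ z).mp hzF i hia
      simp only [Submodule.mem_bot]
      exact e.repr.map_eq_zero_iff.mp (Finsupp.ext hz)
    have h4 : (Sig ⊓ F a) ⊔ (Sig ⊓ G (2 * n - b)) = Sig := by
      have hle : (Sig ⊓ F a) ⊔ (Sig ⊓ G (2 * n - b)) ≤ Sig := sup_le inf_le_left inf_le_left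
      have heq := Submodule.finrank_sup_add_finrank_inf_eq (Sig ⊓ F a) (Sig ⊓ G (2 * n - b))
      rw [h3, finrank_bot] at heq
      have hrk : Module.finrank ℂ ↥Sig ≤
          Module.finrank ℂ ↥((Sig ⊓ F a) ⊔ (Sig ⊓ G (2 * n - b))) := by
        rw [hdim]; omega
      exact Submodule.eq_of_le_of_finrank_le hle hrk
    have hv' : v ∈ (Sig ⊓ F a) ⊔ (Sig ⊓ G (2 * n - b)) := by rw [h4]; exact hv
    obtain ⟨u, hu, w, hw, huw⟩ := Submodule.mem_sup.mp hv'
    exact ⟨u, w, hu.1, hw.1, huw.symm, fun i hi => (hFmem a u).mp hu.2 i hi,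
      fun i hi => (hGmem _ w).mp hw.2 i (by have := i.isLt; omega)⟩
  -- the key partial-sum lemma
  have hkey : ∀ c : ℕ, c ≤ n → (IsCut n P Q c ∨ IsCut n P Q (2 * n - c)) →
      ∑ l ∈ Finset.Icc 1 c, x l * x (2 * n + 1 - l) = 0 := by
    intro c hcn hcut
    have main : ∀ a : ℕ, (a = c ∨ a = 2 * n - c) →
        ∀ u w : V, u ∈ Sig → w ∈ Sig → v = u + w →
          (∀ i : Fin (2 * n), a ≤ (i : ℕ) → e.repr u i = 0) →
          (∀ i : Fin (2 * n), (i : ℕ) < a → e.repr w i = 0) →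
          ∑ l ∈ Finset.Icc 1 c, x l * x (2 * n + 1 - l) = 0 := by
      intro a hac u w hu hw hvuw hus hws
      have h0 : B u w = 0 := hiso u hu w hw
      rw [hBval u w] at h0
      have hvadd : ∀ i : Fin (2 * n), e.repr v i = e.repr u i + e.repr w i := by
        intro i
        rw [hvuw, map_add, Finsupp.add_apply]
      have hterm : ∀ i : Fin (2 * n),
          e.repr u i * (e.repr w (sigmaFin n i) *
            (if (i : ℕ) + 1 ≤ n then (1 : ℂ) else -1)) =
          if (i : ℕ) < c then x ((i : ℕ) + 1) * x (2 * n - (i : ℕ)) else 0 := by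
        intro i
        have hi2 := i.isLt
        by_cases hic : (i : ℕ) < c
        · rw [if_pos hic]
          have hu_eq : e.repr u i = e.repr v i := by
            rw [hvadd i, hws i (by omega), add_zero]
          have hw_eq : e.repr w (sigmaFin n i) = e.repr v (sigmaFin n i) := by
            rw [hvadd, hus (sigmaFin n i) (by simp only [sigmaFin_val]; omega), zero_add]
          rw [hu_eq, hw_eq, if_pos (by omega)]
          rw [hrepr i]
          have h2 : x (2 * n - (i : ℕ)) = e.repr v (sigmaFin n i) := by
            have := hrepr (sigmaFin n i)
            simp only [sigmaFin_val] at this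
            rw [← this]
            congr 1
            omega
          rw [h2]
          ring
        · rw [if_neg hic]
          have hzero : e.repr u i = 0 ∨ e.repr w (sigmaFin n i) = 0 := by
            rcases hac with rfl | rfl
            · exact Or.inl (hus i (by omega))
            · rcases Nat.lt_or_ge (i : ℕ) (2 * n - c) with h | h
              · exact Or.inr (hws (sigmaFin n i) (by simp only [sigmaFin_val]; omega))
              · exact Or.inl (hus i h)
          rcases hzero with h | h
          · rw [h, zero_mul]
          · rw [h, zero_mul, mul_zero]
      rw [Finset.sum_congr rfl fun i _ => hterm i] at h0
      have hstep : ∑ i : Fin (2 * n),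
          (if (i : ℕ) < c then x ((i : ℕ) + 1) * x (2 * n - (i : ℕ)) else 0) =
          ∑ i ∈ Finset.range (2 * n),
          (if i < c then x (i + 1) * x (2 * n - i) else 0) :=
        Fin.sum_univ_eq_sum_range (fun k => if k < c then x (k + 1) * x (2 * n - k) else 0) (2 * n)
      rw [hstep] at h0
      have hsub : ∑ i ∈ Finset.range (2 * n),
          (if i < c then x (i + 1) * x (2 * n - i) else 0) =
          ∑ i ∈ Finset.range c, (if i < c then x (i + 1) * x (2 * n - i) else 0) :=
        (Finset.sum_subset (Finset.range_subset_range.mpr (by omega))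
          (fun i _ hi => if_neg (by simp only [Finset.mem_range] at hi; omega))).symm
      rw [hsub] at h0
      rw [Finset.sum_congr rfl
        (fun i hi => if_pos (Finset.mem_range.mp hi))] at h0
      rw [← Finset.Ico_add_one_right_eq_Icc, Finset.sum_Ico_eq_sum_range]
      have : c + 1 - 1 = c := by omega
      rw [this]
      rw [← h0]
      refine Finset.sum_congr rfl fun i hi => ?_
      have hic : i < c := Finset.mem_range.mp hi
      have e1 : 1 + i = i + 1 := by omega
      have e2 : 2 * n + 1 - (1 + i) = 2 * n - i := by omega
      rw [e2, e1]
    rcases hcut with ⟨t, htm, hp, hq⟩ | ⟨t, htm, hp, hq⟩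
    · obtain ⟨u, w, hu, hw, hvuw, hus, hws⟩ :=
        hdecomp c c le_rfl (by omega) t htm hp hq
      exact main c (Or.inl rfl) u w hu hw hvuw hus hws
    · obtain ⟨u, w, hu, hw, hvuw, hus, hws⟩ :=
        hdecomp (2 * n - c) (2 * n - c) le_rfl (by omega) t htm hp hq
      exact main (2 * n - c) (Or.inr rfl) u w hu hw hvuw hus hws
  refine ⟨?_, ?_, ?_⟩
  · -- part (a)
    intro c d hc hd hcd _ _
    have h1 := hkey c hc.1 hc.2
    have h2 := hkey d hd.1 hd.2
    have hset : Finset.Icc 1 d = Finset.Icc 1 c ∪ Finset.Icc (c + 1) d := by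
      ext l
      simp only [Finset.mem_Icc, Finset.mem_union]
      omega
    have hdisj : Disjoint (Finset.Icc 1 c) (Finset.Icc (c + 1) d) := by
      simp only [Finset.disjoint_left, Finset.mem_Icc]
      intro l h1l h2l
      omega
    rw [hset, Finset.sum_union hdisj, h1, zero_add] at h2
    exact h2
  · -- part (b)
    intro c hc1 hc2 hnone
    have hex : ∃ t : ℕ, t ≤ m ∧ pExt P t ≤ c - 1 ∧ c < qExt n Q (t + 1) := by
      by_cases hS : (Finset.univ.filter (fun j : Fin m => c ≤ P j)).Nonempty
      · set j₀ := (Finset.univ.filter (fun j : Fin m => c ≤ P j)).min' hS with hj₀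
        have hj₀mem := (Finset.univ.filter (fun j : Fin m => c ≤ P j)).min'_mem hS
        rw [Finset.mem_filter] at hj₀mem
        have hcP : c ≤ P j₀ := hj₀mem.2
        refine ⟨(j₀ : ℕ), by omega, ?_, ?_⟩
        · rcases Nat.eq_zero_or_pos (j₀ : ℕ) with h0 | h0
          · rw [pExt, dif_neg (by omega)]
            omega
          · have hjm : (j₀ : ℕ) - 1 < m := by omega
            rw [pExt, dif_pos ⟨h0, by omega⟩]
            by_contra hcon
            have hmem : (⟨(j₀ : ℕ) - 1, hjm⟩ : Fin m) ∈
                Finset.univ.filter (fun j : Fin m => c ≤ P j) := by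
              rw [Finset.mem_filter]
              exact ⟨Finset.mem_univ _, by omega⟩
            have := Finset.min'_le _ _ hmem
            rw [← hj₀] at this
            have : (j₀ : ℕ) ≤ (j₀ : ℕ) - 1 := this
            omega
        · rw [qExt, dif_pos ⟨by omega, by have := j₀.isLt; omega⟩]
          have hj : (⟨(j₀ : ℕ) + 1 - 1, by have := j₀.isLt; omega⟩ : Fin m) = j₀ := by
            ext; simp
          rw [hj]
          have := hnone j₀
          omega
      · refine ⟨m, le_rfl, ?_, ?_⟩
        · rcases Nat.eq_zero_or_pos m with h0 | h0
          · rw [pExt, dif_neg (by omega)]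
            omega
          · have hjm : m - 1 < m := by omega
            rw [pExt, dif_pos ⟨h0, le_rfl⟩]
            have : ¬ c ≤ P ⟨m - 1, hjm⟩ := by
              intro hcon
              exact hS ⟨⟨m - 1, hjm⟩, Finset.mem_filter.mpr ⟨Finset.mem_univ _, hcon⟩⟩
            omega
        · rw [qExt, dif_neg (by omega)]
          omega
    obtain ⟨t, htm, hp, hq⟩ := hex
    obtain ⟨u, w, hu, hw, hvuw, hus, hws⟩ := hdecomp (c - 1) c (by omega) hc2 t htm hp hq
    have hlt : c - 1 < 2 * n := by omega
    rw [hx c hc1 hlt]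
    have hvadd : e.repr v ⟨c - 1, hlt⟩ = e.repr u ⟨c - 1, hlt⟩ + e.repr w ⟨c - 1, hlt⟩ := by
      rw [hvuw, map_add, Finsupp.add_apply]
    rw [hvadd, hus ⟨c - 1, hlt⟩ le_rfl, hws ⟨c - 1, hlt⟩ (by simp; omega), add_zero]
  · -- part (c)
    rintro c hc1 hc2 ⟨j, hQPj, hPc⟩
    have hp1 : 1 ≤ P j := (hPrange j).1
    have hp2 : P j ≤ 2 * n := (hPrange j).2
    have hA : (j : ℕ) + 1 ≤ Module.finrank ℂ ↥(Sig ⊓ F (P j)) := hSchubF j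
    have hBk : m - (j : ℕ) ≤ Module.finrank ℂ ↥(Sig ⊓ G (2 * n + 1 - P j)) := by
      have := hSchubG j
      rw [hQPj] at this
      exact this
    have hjm := j.isLt
    have hsup : Module.finrank ℂ ↥((Sig ⊓ F (P j)) ⊔ (Sig ⊓ G (2 * n + 1 - P j))) ≤ m := by
      rw [← hdim]
      exact Submodule.finrank_mono (sup_le inf_le_left inf_le_left)
    have heq := Submodule.finrank_sup_add_finrank_inf_eq (Sig ⊓ F (P j))
      (Sig ⊓ G (2 * n + 1 - P j))
    have hpos : 0 < Module.finrank ℂ ↥((Sig ⊓ F (P j)) ⊓ (Sig ⊓ G (2 * n + 1 - P j))) := by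
      omega
    haveI := Module.finrank_pos_iff.mp hpos
    obtain ⟨w', hw'⟩ := exists_ne (0 : ↥((Sig ⊓ F (P j)) ⊓ (Sig ⊓ G (2 * n + 1 - P j))))
    set w : V := (w' : V) with hwdef
    have hwne : w ≠ 0 := fun h => hw' (Subtype.ext h)
    have hwSig : w ∈ Sig := w'.2.1.1
    have hwF : ∀ i : Fin (2 * n), P j ≤ (i : ℕ) → e.repr w i = 0 :=
      fun i hi => (hFmem _ w).mp w'.2.1.2 i hi
    have hwG : ∀ i : Fin (2 * n), (i : ℕ) + (2 * n + 1 - P j) < 2 * n → e.repr w i = 0 :=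
      fun i hi => (hGmem _ w).mp w'.2.2.2 i hi
    have hwsupp : ∀ i : Fin (2 * n), (i : ℕ) ≠ P j - 1 → e.repr w i = 0 := by
      intro i hi
      have hi2 := i.isLt
      rcases Nat.lt_or_ge (i : ℕ) (P j - 1) with h | h
      · exact hwG i (by omega)
      · exact hwF i (by omega)
    have hplt : P j - 1 < 2 * n := by omega
    have hwp : e.repr w ⟨P j - 1, hplt⟩ ≠ 0 := by
      intro h0
      apply hwne
      apply e.repr.map_eq_zero_iff.mp
      apply Finsupp.ext
      intro i
      rcases eq_or_ne ((i : ℕ)) (P j - 1) with h | h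
      · have : i = ⟨P j - 1, hplt⟩ := by ext; exact h
        rw [this]; exact h0
      · exact hwsupp i h
    have h0 : B v w = 0 := hiso v hv w hwSig
    rw [hBval v w] at h0
    have hclt : c - 1 < 2 * n := by omega
    rw [Finset.sum_eq_single (⟨c - 1, hclt⟩ : Fin (2 * n))] at h0
    · have hsig : sigmaFin n ⟨c - 1, hclt⟩ = ⟨P j - 1, hplt⟩ := by
        ext
        simp only [sigmaFin_val]
        omega
      rw [hsig] at h0
      have hne : (if (c - 1 : ℕ) + 1 ≤ n then (1 : ℂ) else -1) ≠ 0 := by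
        split
        · exact one_ne_zero
        · exact neg_ne_zero.mpr one_ne_zero
      have hx0 : e.repr v ⟨c - 1, hclt⟩ = 0 := by
        rcases mul_eq_zero.mp h0 with h | h
        · exact h
        · rcases mul_eq_zero.mp h with h | h
          · exact absurd h hwp
          · simp only [Fin.val_mk] at h
            exact absurd h hne
      rw [hx c hc1 hclt]
      exact hx0
    · intro i _ hi
      have hs : e.repr w (sigmaFin n i) = 0 := by
        apply hwsupp
        simp only [sigmaFin_val]
        have hi2 := i.isLt
        intro hcon
        apply hi
        ext
        simp only [Fin.val_mk]
        omega
      rw [hs, zero_mul, mul_zero]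
    · intro h
      exact absurd (Finset.mem_univ _) h
end
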